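/- arXiv:2412.20919 — 13 statements merged into one kernel-verified Lean document; each statement's English description precedes it below -/
import Mathlib

section
/- Let a,b>0 and k>0 with sin(ak)≠0 and sin(bk)≠0. Define F(τ₁,τ₂,k) := (τ₁−cos(ak))/sin(ak) + (τ₂−cos(bk))/sin(bk). Then the maximum of F(τ₁,τ₂,k) over (τ₁,τ₂)∈[−1,1]×[−1,1] equals F₊(k) := tan(ka/2 − (π/2)·⌊ka/π⌋) + tan(kb/2 − (π/2)·⌊kb/π⌋), and the minimum equals F₋(k) := −cot(ka/2 − (π/2)·⌊ka/π⌋) − cot(kb/2 − (π/2)·⌊kb/π⌋). -/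
set_option maxHeartbeats 1000000

open Real Set

lemma one_var (x : ℝ) (hs : Real.sin x ≠ 0) :
    ∃ τp ∈ Set.Icc (-1:ℝ) 1, ∃ τm ∈ Set.Icc (-1:ℝ) 1,
      (τp - Real.cos x) / Real.sin x =
        Real.tan (x/2 - π/2 * (⌊x/π⌋:ℤ)) ∧
      (τm - Real.cos x) / Real.sin x =
        -Real.cos (x/2 - π/2*(⌊x/π⌋:ℤ)) / Real.sin (x/2 - π/2*(⌊x/π⌋:ℤ)) ∧
      ∀ t ∈ Set.Icc (-1:ℝ) 1,
        (t - Real.cos x)/Real.sin x ≤ Real.tan (x/2 - π/2*(⌊x/π⌋:ℤ)) ∧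
        -Real.cos (x/2 - π/2*(⌊x/π⌋:ℤ)) / Real.sin (x/2 - π/2*(⌊x/π⌋:ℤ)) ≤
          (t - Real.cos x)/Real.sin x := by
  have hpi := Real.pi_pos
  set n : ℤ := ⌊x / π⌋ with hn
  set θ : ℝ := x/2 - π/2 * (n:ℝ) with hθdef
  have h1 : (n:ℝ) ≤ x / π := Int.floor_le _
  have h2 : x / π < (n:ℝ) + 1 := Int.lt_floor_add_one _
  clear_value n θ
  have hxn : x ≠ (n:ℝ) * π := by
    intro h; apply hs; rw [h]; exact Real.sin_int_mul_pi n
  have hl : (n:ℝ) * π ≤ x := (le_div_iff₀ hpi).mp h1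
  have hu : x < ((n:ℝ) + 1) * π := (div_lt_iff₀ hpi).mp h2
  have hl' : (n:ℝ) * π < x := lt_of_le_of_ne hl (Ne.symm hxn)
  have hθ1 : 0 < θ := by rw [hθdef]; nlinarith
  have hθ2 : θ < π/2 := by rw [hθdef]; nlinarith
  have hsθ : 0 < Real.sin θ := Real.sin_pos_of_pos_of_lt_pi hθ1 (by linarith)
  have hcθ : 0 < Real.cos θ := Real.cos_pos_of_mem_Ioo ⟨by linarith, hθ2⟩
  have hx2 : x = 2*θ + (n:ℝ)*π := by rw [hθdef]; ring
  set ε : ℝ := Real.cos ((n:ℝ)*π) with hε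
  have hsn : Real.sin ((n:ℝ)*π) = 0 := Real.sin_int_mul_pi n
  have hε2 : ε^2 = 1 := by
    have := Real.sin_sq_add_cos_sq ((n:ℝ)*π)
    rw [hsn] at this; nlinarith
  have hsinx : Real.sin x = ε * Real.sin (2*θ) := by
    rw [hx2, Real.sin_add, hsn]; ring
  have hcosx : Real.cos x = ε * Real.cos (2*θ) := by
    rw [hx2, Real.cos_add, hsn]; ring
  have hs2 : Real.sin (2*θ) = 2 * Real.sin θ * Real.cos θ := Real.sin_two_mul θ
  have hc2 : Real.cos (2*θ) = 2 * Real.cos θ^2 - 1 := Real.cos_two_mul θ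
  have hpyth : Real.sin θ^2 + Real.cos θ^2 = 1 := Real.sin_sq_add_cos_sq θ
  have htan : Real.tan θ = Real.sin θ / Real.cos θ := Real.tan_eq_sin_div_cos θ
  have hεcases : ε = 1 ∨ ε = -1 := by
    have : (ε - 1) * (ε + 1) = 0 := by nlinarith
    rcases mul_eq_zero.mp this with h | h
    · left; linarith
    · right; linarith
  refine ⟨ε, ?_, -ε, ?_, ?_, ?_, ?_⟩
  · rcases hεcases with h | h <;> rw [h] <;> constructor <;> norm_num
  · rcases hεcases with h | h <;> rw [h] <;> constructor <;> norm_num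
  · rw [hsinx, hcosx, hs2, hc2, htan]
    rcases hεcases with h | h <;> rw [h] <;> field_simp <;> nlinarith
  · rw [hsinx, hcosx, hs2, hc2]
    rcases hεcases with h | h <;> rw [h] <;> field_simp <;> nlinarith
  · intro t ht
    obtain ⟨htl, htu⟩ := ht
    constructor
    · rw [hsinx, hcosx, hs2, hc2, htan]
      rcases hεcases with h | h <;> rw [h]
      · rw [div_le_div_iff₀ (by nlinarith) hcθ]; nlinarith
      · have : (t - -1 * (2 * Real.cos θ^2 - 1)) / (-1 * (2 * Real.sin θ * Real.cos θ))
            = (-(t + (2 * Real.cos θ^2 - 1))) / (2 * Real.sin θ * Real.cos θ) := by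
          rw [div_eq_div_iff (by nlinarith) (by nlinarith)]; ring
        rw [this, div_le_div_iff₀ (by nlinarith) hcθ]; nlinarith
    · rw [hsinx, hcosx, hs2, hc2, neg_div]
      rcases hεcases with h | h <;> rw [h]
      · rw [neg_le, ← neg_div, div_le_div_iff₀ (by nlinarith) hsθ]; nlinarith
      · have this' : (-(t - -1 * (2 * Real.cos θ^2 - 1))) / (-1 * (2 * Real.sin θ * Real.cos θ))
            = (t + (2 * Real.cos θ^2 - 1)) / (2 * Real.sin θ * Real.cos θ) := by
          rw [div_eq_div_iff (by nlinarith) (by nlinarith)]; ring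
        rw [neg_le, ← neg_div, this', div_le_div_iff₀ (by nlinarith) hsθ]; nlinarith

theorem stmt_2 (a b k : ℝ) (ha : 0 < a) (hb : 0 < b) (hk : 0 < k)
    (hsa : Real.sin (a * k) ≠ 0) (hsb : Real.sin (b * k) ≠ 0) :
    IsGreatest ((fun p : ℝ × ℝ =>
        (p.1 - Real.cos (a * k)) / Real.sin (a * k) +
          (p.2 - Real.cos (b * k)) / Real.sin (b * k)) ''
        (Set.Icc (-1 : ℝ) 1 ×ˢ Set.Icc (-1 : ℝ) 1))
      (Real.tan (k * a / 2 - π / 2 * (⌊k * a / π⌋ : ℤ)) +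
        Real.tan (k * b / 2 - π / 2 * (⌊k * b / π⌋ : ℤ))) ∧
    IsLeast ((fun p : ℝ × ℝ =>
        (p.1 - Real.cos (a * k)) / Real.sin (a * k) +
          (p.2 - Real.cos (b * k)) / Real.sin (b * k)) ''
        (Set.Icc (-1 : ℝ) 1 ×ˢ Set.Icc (-1 : ℝ) 1))
      (-Real.cos (k * a / 2 - π / 2 * (⌊k * a / π⌋ : ℤ)) / Real.sin (k * a / 2 - π / 2 * (⌊k * a / π⌋ : ℤ)) -
        Real.cos (k * b / 2 - π / 2 * (⌊k * b / π⌋ : ℤ)) / Real.sin (k * b / 2 - π / 2 * (⌊k * b / π⌋ : ℤ))) := by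
  have hka : k * a = a * k := mul_comm k a
  have hkb : k * b = b * k := mul_comm k b
  rw [hka, hkb]
  obtain ⟨τp1, hτp1, τm1, hτm1, hep1, hem1, hb1⟩ := one_var (a*k) hsa
  obtain ⟨τp2, hτp2, τm2, hτm2, hep2, hem2, hb2⟩ := one_var (b*k) hsb
  have hdiv : a*k/2 = (a*k)/2 := rfl
  constructor
  · constructor
    · exact ⟨(τp1, τp2), ⟨hτp1, hτp2⟩, by simp only []; rw [hep1, hep2]⟩
    · rintro y ⟨⟨t1, t2⟩, ⟨ht1, ht2⟩, rfl⟩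
      have := (hb1 t1 ht1).1
      have := (hb2 t2 ht2).1
      simp only [] at *
      linarith
  · constructor
    · refine ⟨(τm1, τm2), ⟨hτm1, hτm2⟩, ?_⟩
      simp only []
      rw [hem1, hem2]
      ring
    · rintro y ⟨⟨t1, t2⟩, ⟨ht1, ht2⟩, rfl⟩
      have h1 := (hb1 t1 ht1).2
      have h2 := (hb2 t2 ht2).2
      simp only [neg_div] at *
      linarith
end

section
/- Let a,b>0 and let Ξ := {k>0 : sin(ka)=0 or sin(kb)=0}. Define F₊(k) := tan(ka/2 − (π/2)·⌊ka/π⌋) + tan(kb/2 − (π/2)·⌊kb/π⌋) and F₋(k) := −cot(ka/2 − (π/2)·⌊ka/π⌋) − cot(kb/2 − (π/2)·⌊kb/π⌋) for k∈(0,∞)∖Ξ. Then: (i) F₊(k) ≥ 0 and F₋(k) ≤ 0 for all k∈(0,∞)∖Ξ; (ii) both F₊ and F₋ are strictly increasing on every connected component interval of (0,∞)∖Ξ; (iii) for every k₀∈Ξ one has F₊(k) → +∞ as k → k₀ from the left and F₋(k) → −∞ as k → k₀ from the right. -/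
open Real Set Filter Topology

noncomputable def th (c k : ℝ) : ℝ := k * c / 2 - π / 2 * (⌊k * c / π⌋ : ℤ)

lemma th_eq (c k : ℝ) : th c k = π / 2 * Int.fract (k * c / π) := by
  unfold th Int.fract
  have hπ : (π : ℝ) ≠ 0 := Real.pi_ne_zero
  field_simp

lemma th_mem (c k : ℝ) : th c k ∈ Ico 0 (π / 2) := by
  rw [th_eq]
  constructor
  · exact mul_nonneg (by linarith [Real.pi_pos]) (Int.fract_nonneg _)
  · have h1 : Int.fract (k * c / π) < 1 := Int.fract_lt_one _
    have := Real.pi_pos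
    nlinarith

lemma th_pos {c k : ℝ} (hs : Real.sin (k * c) ≠ 0) : th c k ∈ Ioo 0 (π / 2) := by
  have hm := th_mem c k
  refine ⟨lt_of_le_of_ne hm.1 ?_, hm.2⟩
  intro h
  rw [th_eq] at h
  have hπ := Real.pi_pos
  have hf : Int.fract (k * c / π) = 0 := by
    rcases mul_eq_zero.1 h.symm with h' | h'
    · nlinarith
    · exact h'
  have : k * c / π = (⌊k * c / π⌋ : ℝ) := by
    have := Int.fract_add_floor (k * c / π)
    linarith [Int.self_sub_floor (k * c / π)]
  apply hs
  have hkc : k * c = (⌊k * c / π⌋ : ℝ) * π := by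
    field_simp at this
    linarith
  rw [hkc]
  exact Real.sin_int_mul_pi _

lemma neg_cot_eq (θ : ℝ) : -(Real.cos θ / Real.sin θ) = Real.tan (θ - π / 2) := by
  rw [Real.tan_eq_sin_div_cos, Real.sin_sub_pi_div_two, Real.cos_sub_pi_div_two, neg_div]

lemma floor_const {c x y : ℝ} (hc : 0 < c)
    (h : ∀ k ∈ Ioo x y, Real.sin (k * c) ≠ 0) {k₁ k₂ : ℝ}
    (h1 : k₁ ∈ Ioo x y) (h2 : k₂ ∈ Ioo x y) (hle : k₁ ≤ k₂) :
    ⌊k₁ * c / π⌋ = ⌊k₂ * c / π⌋ := by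
  have hπ := Real.pi_pos
  have hmono : k₁ * c / π ≤ k₂ * c / π := by gcongr
  refine le_antisymm (Int.floor_le_floor hmono) ?_
  by_contra hlt
  push_neg at hlt
  set n : ℤ := ⌊k₂ * c / π⌋ with hn
  have hn2 : (n : ℝ) ≤ k₂ * c / π := Int.floor_le _
  have hne : (n : ℝ) ≠ k₂ * c / π := by
    intro he
    apply h k₂ h2
    have : k₂ * c = (n : ℝ) * π := by field_simp at he ⊢; linarith
    rw [this]; exact Real.sin_int_mul_pi _
  have hn2' : (n : ℝ) < k₂ * c / π := lt_of_le_of_ne hn2 hne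
  have hn1 : k₁ * c / π < (n : ℝ) := by
    by_contra hge
    push_neg at hge
    exact absurd (Int.le_floor.2 hge) (not_le.2 hlt)
  set k : ℝ := (n : ℝ) * π / c with hk
  have hk1 : k₁ < k := by
    rw [hk]
    rw [div_lt_iff₀ hπ] at hn1
    rw [lt_div_iff₀ hc]
    nlinarith
  have hk2 : k < k₂ := by
    rw [hk]
    rw [lt_div_iff₀ hπ] at hn2'
    rw [div_lt_iff₀ hc]
    nlinarith
  apply h k ⟨h1.1.trans hk1, hk2.trans h2.2⟩
  have : k * c = (n : ℝ) * π := by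
    rw [hk]; field_simp
  rw [this]; exact Real.sin_int_mul_pi _


lemma tendsto_th_left {c k₀ : ℝ} (hc : 0 < c) (hk : 0 < k₀) (hs : Real.sin (k₀ * c) = 0) :
    Tendsto (fun k => th c k) (𝓝[<] k₀) (𝓝[<] (π / 2)) := by
  have hπ := Real.pi_pos
  obtain ⟨n, hn⟩ := Real.sin_eq_zero_iff.1 hs
  have hnpos : (0 : ℝ) < (n : ℝ) * π := by rw [hn]; positivity
  have hn0 : 0 < n := by
    have : (0 : ℝ) < (n : ℝ) := by nlinarith
    exact_mod_cast this
  have hmem : Ioo (k₀ - π / c) k₀ ∈ 𝓝[<] k₀ :=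
    Ioo_mem_nhdsLT_of_mem ⟨by nlinarith [div_pos hπ hc], le_rfl⟩
  have heq : ∀ k ∈ Ioo (k₀ - π / c) k₀, th c k = k * c / 2 - π / 2 * ((n : ℝ) - 1) := by
    intro k hkm
    have h1 : (n : ℝ) * π - π < k * c := by
      have : (k₀ - π / c) * c < k * c := by nlinarith [hkm.1]
      have h2 : (k₀ - π / c) * c = k₀ * c - π := by field_simp
      nlinarith [hn]
    have h2 : k * c < (n : ℝ) * π := by nlinarith [hkm.2, hn]
    have hfl : ⌊k * c / π⌋ = n - 1 := by
      rw [Int.floor_eq_iff]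
      push_cast
      constructor
      · rw [le_div_iff₀ hπ]; nlinarith
      · rw [div_lt_iff₀ hπ]; nlinarith
    unfold th
    rw [hfl]
    push_cast
    ring
  have hlim : Tendsto (fun k => k * c / 2 - π / 2 * ((n : ℝ) - 1)) (𝓝[<] k₀) (𝓝[<] (π / 2)) := by
    rw [tendsto_nhdsWithin_iff]
    constructor
    · have hcont : Continuous (fun k : ℝ => k * c / 2 - π / 2 * ((n : ℝ) - 1)) := by continuity
      have h0 := hcont.tendsto k₀
      rw [show k₀ * c / 2 - π / 2 * ((n : ℝ) - 1) = π / 2 from by nlinarith [hn]] at h0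
      exact h0.mono_left nhdsWithin_le_nhds
    · filter_upwards [self_mem_nhdsWithin] with k hkm
      simp only [mem_Iio] at hkm ⊢
      nlinarith [hn]
  refine Tendsto.congr' ?_ hlim
  filter_upwards [hmem] with k hkm
  exact (heq k hkm).symm

lemma tendsto_th_right {c k₀ : ℝ} (hc : 0 < c) (hk : 0 < k₀) (hs : Real.sin (k₀ * c) = 0) :
    Tendsto (fun k => th c k - π / 2) (𝓝[>] k₀) (𝓝[>] (-(π / 2))) := by
  have hπ := Real.pi_pos
  obtain ⟨n, hn⟩ := Real.sin_eq_zero_iff.1 hs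
  have hmem : Ioo k₀ (k₀ + π / c) ∈ 𝓝[>] k₀ :=
    Ioo_mem_nhdsGT_of_mem ⟨le_rfl, by nlinarith [div_pos hπ hc]⟩
  have heq : ∀ k ∈ Ioo k₀ (k₀ + π / c), th c k - π / 2 = k * c / 2 - π / 2 * (n : ℝ) - π / 2 := by
    intro k hkm
    have h1 : (n : ℝ) * π < k * c := by nlinarith [hkm.1, hn]
    have h2 : k * c < (n : ℝ) * π + π := by
      have h3 : k * c < (k₀ + π / c) * c := by nlinarith [hkm.2]
      have h4 : (k₀ + π / c) * c = k₀ * c + π := by field_simp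
      nlinarith [hn]
    have hfl : ⌊k * c / π⌋ = n := by
      rw [Int.floor_eq_iff]
      push_cast
      constructor
      · rw [le_div_iff₀ hπ]; nlinarith
      · rw [div_lt_iff₀ hπ]; nlinarith
    unfold th
    rw [hfl]
  have hlim : Tendsto (fun k => k * c / 2 - π / 2 * (n : ℝ) - π / 2) (𝓝[>] k₀) (𝓝[>] (-(π / 2))) := by
    rw [tendsto_nhdsWithin_iff]
    constructor
    · have hcont : Continuous (fun k : ℝ => k * c / 2 - π / 2 * (n : ℝ) - π / 2) := by continuity
      have h0 := hcont.tendsto k₀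
      rw [show k₀ * c / 2 - π / 2 * (n : ℝ) - π / 2 = -(π / 2) from by nlinarith [hn]] at h0
      exact h0.mono_left nhdsWithin_le_nhds
    · filter_upwards [self_mem_nhdsWithin] with k hkm
      simp only [mem_Ioi] at hkm ⊢
      nlinarith [hn]
  refine Tendsto.congr' ?_ hlim
  filter_upwards [hmem] with k hkm
  exact (heq k hkm).symm

lemma tan_th_nonneg (c k : ℝ) : 0 ≤ Real.tan (th c k) :=
  Real.tan_nonneg_of_nonneg_of_le_pi_div_two (th_mem c k).1 (th_mem c k).2.le

lemma tan_th_nonpos (c k : ℝ) : Real.tan (th c k - π / 2) ≤ 0 :=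
  Real.tan_nonpos_of_nonpos_of_neg_pi_div_two_le (by linarith [(th_mem c k).2])
    (by linarith [(th_mem c k).1])

theorem stmt_3 (a b : ℝ) (ha : 0 < a) (hb : 0 < b)
    (Ξ : Set ℝ) (hΞ : Ξ = {k : ℝ | 0 < k ∧ (Real.sin (k * a) = 0 ∨ Real.sin (k * b) = 0)})
    (Fp Fm : ℝ → ℝ)
    (hFp : Fp = fun k => Real.tan (k * a / 2 - π / 2 * (⌊k * a / π⌋ : ℤ)) +
        Real.tan (k * b / 2 - π / 2 * (⌊k * b / π⌋ : ℤ)))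
    (hFm : Fm = fun k =>
        -(Real.cos (k * a / 2 - π / 2 * (⌊k * a / π⌋ : ℤ)) /
            Real.sin (k * a / 2 - π / 2 * (⌊k * a / π⌋ : ℤ))) -
          Real.cos (k * b / 2 - π / 2 * (⌊k * b / π⌋ : ℤ)) /
            Real.sin (k * b / 2 - π / 2 * (⌊k * b / π⌋ : ℤ))) :
    (∀ k ∈ Set.Ioi (0 : ℝ) \ Ξ, 0 ≤ Fp k ∧ Fm k ≤ 0) ∧
    (∀ x y : ℝ, 0 ≤ x → Set.Ioo x y ⊆ Set.Ioi (0 : ℝ) \ Ξ →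
      StrictMonoOn Fp (Set.Ioo x y) ∧ StrictMonoOn Fm (Set.Ioo x y)) ∧
    (∀ k₀ ∈ Ξ, Tendsto Fp (nhdsWithin k₀ (Set.Iio k₀)) atTop ∧
      Tendsto Fm (nhdsWithin k₀ (Set.Ioi k₀)) atBot) := by
  have hπ := Real.pi_pos
  have hFp' : ∀ k, Fp k = Real.tan (th a k) + Real.tan (th b k) := by
    intro k; rw [hFp]; rfl
  have hFm' : ∀ k, Fm k = Real.tan (th a k - π / 2) + Real.tan (th b k - π / 2) := by
    intro k; rw [hFm]; simp only []
    show -(Real.cos (th a k) / Real.sin (th a k)) - Real.cos (th b k) / Real.sin (th b k) = _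
    rw [← neg_cot_eq, ← neg_cot_eq]; ring
  refine ⟨?_, ?_, ?_⟩
  · intro k _
    constructor
    · rw [hFp']
      exact add_nonneg (tan_th_nonneg a k) (tan_th_nonneg b k)
    · rw [hFm']
      exact add_nonpos (tan_th_nonpos a k) (tan_th_nonpos b k)
  · intro x y _ hsub
    have hsin : ∀ k ∈ Ioo x y, Real.sin (k * a) ≠ 0 ∧ Real.sin (k * b) ≠ 0 := by
      intro k hk
      obtain ⟨hk1, hk2⟩ := hsub hk
      rw [hΞ] at hk2
      simp only [mem_setOf_eq, not_and, not_or] at hk2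
      exact hk2 hk1
    have key : ∀ c : ℝ, 0 < c → (∀ k ∈ Ioo x y, Real.sin (k * c) ≠ 0) →
        ∀ k₁ ∈ Ioo x y, ∀ k₂ ∈ Ioo x y, k₁ < k₂ →
        th c k₁ < th c k₂ ∧ th c k₁ ∈ Ioo 0 (π / 2) ∧ th c k₂ ∈ Ioo 0 (π / 2) := by
      intro c hc hsc k₁ h1 k₂ h2 hlt
      have hfl := floor_const hc hsc h1 h2 hlt.le
      refine ⟨?_, th_pos (hsc k₁ h1), th_pos (hsc k₂ h2)⟩
      unfold th
      rw [hfl]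
      nlinarith
    constructor
    · intro k₁ h1 k₂ h2 hlt
      obtain ⟨hta, hma1, hma2⟩ := key a ha (fun k hk => (hsin k hk).1) k₁ h1 k₂ h2 hlt
      obtain ⟨htb, hmb1, hmb2⟩ := key b hb (fun k hk => (hsin k hk).2) k₁ h1 k₂ h2 hlt
      rw [hFp', hFp']
      have t1 := Real.strictMonoOn_tan ⟨by linarith [hma1.1], by linarith [hma1.2]⟩
        ⟨by linarith [hma2.1], by linarith [hma2.2]⟩ hta
      have t2 := Real.strictMonoOn_tan ⟨by linarith [hmb1.1], by linarith [hmb1.2]⟩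
        ⟨by linarith [hmb2.1], by linarith [hmb2.2]⟩ htb
      exact add_lt_add t1 t2
    · intro k₁ h1 k₂ h2 hlt
      obtain ⟨hta, hma1, hma2⟩ := key a ha (fun k hk => (hsin k hk).1) k₁ h1 k₂ h2 hlt
      obtain ⟨htb, hmb1, hmb2⟩ := key b hb (fun k hk => (hsin k hk).2) k₁ h1 k₂ h2 hlt
      rw [hFm', hFm']
      have t1 := Real.strictMonoOn_tan
        (⟨by linarith [hma1.1], by linarith [hma1.2]⟩ : th a k₁ - π / 2 ∈ Ioo (-(π/2)) (π/2))
        (⟨by linarith [hma2.1], by linarith [hma2.2]⟩ : th a k₂ - π / 2 ∈ Ioo (-(π/2)) (π/2))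
        (by linarith)
      have t2 := Real.strictMonoOn_tan
        (⟨by linarith [hmb1.1], by linarith [hmb1.2]⟩ : th b k₁ - π / 2 ∈ Ioo (-(π/2)) (π/2))
        (⟨by linarith [hmb2.1], by linarith [hmb2.2]⟩ : th b k₂ - π / 2 ∈ Ioo (-(π/2)) (π/2))
        (by linarith)
      exact add_lt_add t1 t2
  · intro k₀ hk₀
    rw [hΞ] at hk₀
    obtain ⟨hk0, hor⟩ := hk₀
    constructor
    · have hFpe : Fp = fun k => Real.tan (th a k) + Real.tan (th b k) := funext hFp'
      rw [hFpe]
      rcases hor with h | h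
      · exact Filter.Tendsto.atTop_add_nonneg
          ((Real.tendsto_tan_pi_div_two).comp (tendsto_th_left ha hk0 h))
          (fun k => tan_th_nonneg b k)
      · exact Filter.Tendsto.nonneg_add_atTop
          (fun k => tan_th_nonneg a k)
          ((Real.tendsto_tan_pi_div_two).comp (tendsto_th_left hb hk0 h))
    · have hFme : Fm = fun k => Real.tan (th a k - π / 2) + Real.tan (th b k - π / 2) :=
        funext hFm'
      rw [hFme]
      rcases hor with h | h
      · exact Filter.Tendsto.atBot_add_nonpos
          ((Real.tendsto_tan_neg_pi_div_two).comp (tendsto_th_right ha hk0 h))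
          (fun k => tan_th_nonpos b k)
      · exact Filter.Tendsto.nonpos_add_atBot
          (fun k => tan_th_nonpos a k)
          ((Real.tendsto_tan_neg_pi_div_two).comp (tendsto_th_right hb hk0 h))
end

section
/- Let a,b>0 and γ<0. Then the equation γ/(2κ) = −tanh(κa/2) − tanh(κb/2) has exactly one root κ₁ in (0,∞). -/
open Real Set

lemma my_tanh_lt_tanh {x y : ℝ} (hxy : x < y) : Real.tanh x < Real.tanh y := by
  rw [Real.tanh_eq_sinh_div_cosh, Real.tanh_eq_sinh_div_cosh,
    div_lt_div_iff₀ (Real.cosh_pos x) (Real.cosh_pos y)]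
  have h1 : 0 < Real.sinh (y - x) := Real.sinh_pos_iff.2 (by linarith)
  have h2 := Real.sinh_sub y x
  linarith

lemma my_tanh_nonneg {x : ℝ} (hx : 0 ≤ x) : 0 ≤ Real.tanh x := by
  rcases eq_or_lt_of_le hx with h | h
  · simp [← h]
  · have := my_tanh_lt_tanh h
    simpa [Real.tanh_zero] using this.le

lemma my_tanh_one_gt_half : (1:ℝ)/2 < Real.tanh 1 := by
  rw [Real.tanh_eq_sinh_div_cosh, lt_div_iff₀ (Real.cosh_pos 1)]
  rw [Real.sinh_eq, Real.cosh_eq]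
  have h1 : (2.7182818283 : ℝ) < Real.exp 1 := Real.exp_one_gt_d9
  have h2 : Real.exp (-1) = (Real.exp 1)⁻¹ := by rw [Real.exp_neg]
  have h3 : 0 < Real.exp 1 := Real.exp_pos 1
  rw [h2]
  rw [inv_eq_one_div]
  have h4 : Real.exp 1 * Real.exp 1 > 3 := by nlinarith
  have h5 : (1:ℝ)/Real.exp 1 < Real.exp 1 / 3 := by
    rw [div_lt_div_iff₀ h3 (by norm_num : (0:ℝ) < 3)]; linarith
  nlinarith

lemma my_continuous_tanh : Continuous Real.tanh := by
  have : Real.tanh = fun x => Real.sinh x / Real.cosh x := by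
    funext x; exact Real.tanh_eq_sinh_div_cosh x
  rw [this]
  exact Real.continuous_sinh.div Real.continuous_cosh (fun x => (Real.cosh_pos x).ne')

theorem stmt_4 (a b γ : ℝ) (ha : 0 < a) (hb : 0 < b) (hγ : γ < 0) :
    ∃! κ : ℝ, 0 < κ ∧ γ / (2 * κ) = -Real.tanh (κ * a / 2) - Real.tanh (κ * b / 2) := by
  set F : ℝ → ℝ := fun κ => 2 * κ * (Real.tanh (κ * a / 2) + Real.tanh (κ * b / 2)) with hF
  have hFcont : Continuous F := by
    apply Continuous.mul (by continuity)
    exact (my_continuous_tanh.comp (by continuity)).add (my_continuous_tanh.comp (by continuity))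
  have hF0 : F 0 = 0 := by simp [hF]
  -- strict monotonicity of F on [0, ∞)
  have hmono : ∀ x y, 0 ≤ x → x < y → F x < F y := by
    intro x y hx hxy
    have h1 : Real.tanh (x * a / 2) < Real.tanh (y * a / 2) := by
      apply my_tanh_lt_tanh
      have := mul_lt_mul_of_pos_right hxy ha
      linarith
    have h2 : Real.tanh (x * b / 2) < Real.tanh (y * b / 2) := by
      apply my_tanh_lt_tanh
      have := mul_lt_mul_of_pos_right hxy hb
      linarith
    have hx1 : 0 ≤ Real.tanh (x * a / 2) := my_tanh_nonneg (by positivity)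
    have hx2 : 0 ≤ Real.tanh (x * b / 2) := my_tanh_nonneg (by positivity)
    have : 2 * x * (Real.tanh (x * a / 2) + Real.tanh (x * b / 2)) <
        2 * y * (Real.tanh (y * a / 2) + Real.tanh (y * b / 2)) := by
      rcases eq_or_lt_of_le hx with h | h
      · have hy : 0 < y := by linarith
        have : 0 < Real.tanh (y * a / 2) := lt_of_le_of_lt hx1 h1
        nlinarith
      · apply mul_lt_mul'' (by linarith) (by linarith) (by linarith) (by linarith)
    exact this
  -- equation equivalence
  have hequiv : ∀ κ : ℝ, 0 < κ →
      ((γ / (2 * κ) = -Real.tanh (κ * a / 2) - Real.tanh (κ * b / 2)) ↔ F κ = -γ) := by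
    intro κ hκ
    rw [div_eq_iff (by positivity : (2:ℝ) * κ ≠ 0), hF]
    constructor <;> intro h <;> nlinarith
  -- existence via IVT
  set K : ℝ := max (2 / a) (max (2 / b) (2 * (-γ))) with hK
  have hKpos : 0 < K := lt_of_lt_of_le (by linarith : (0:ℝ) < 2 * (-γ))
    (le_trans (le_max_right _ _) (le_max_right _ _))
  have hKa : 1 ≤ K * a / 2 := by
    have : 2 / a ≤ K := le_max_left _ _
    rw [le_div_iff₀ (by positivity : (0:ℝ) < 2)]
    calc (1:ℝ) * 2 = (2/a) * a := by field_simp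
    _ ≤ K * a := by apply mul_le_mul_of_nonneg_right this ha.le
  have hFK : -γ ≤ F K := by
    have h1 : Real.tanh 1 ≤ Real.tanh (K * a / 2) := by
      rcases eq_or_lt_of_le hKa with h | h
      · rw [← h]
      · exact (my_tanh_lt_tanh h).le
    have h2 : (1:ℝ)/2 < Real.tanh (K * a / 2) := lt_of_lt_of_le my_tanh_one_gt_half h1
    have h3 : 0 ≤ Real.tanh (K * b / 2) := my_tanh_nonneg (by positivity)
    have h4 : 2 * (-γ) ≤ K := le_trans (le_max_right _ _) (le_max_right _ _)
    have : K ≤ F K := by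
      simp only [hF]
      nlinarith
    linarith
  have hivt : ∃ κ ∈ Icc (0:ℝ) K, F κ = -γ := by
    have : (-γ) ∈ Icc (F 0) (F K) := ⟨by rw [hF0]; linarith, hFK⟩
    have := intermediate_value_Icc hKpos.le hFcont.continuousOn this
    exact this
  obtain ⟨κ₁, ⟨hκ₁0, hκ₁K⟩, hκ₁⟩ := hivt
  have hκ₁pos : 0 < κ₁ := by
    rcases eq_or_lt_of_le hκ₁0 with h | h
    · exfalso; rw [← h, hF0] at hκ₁; linarith
    · exact h
  refine ⟨κ₁, ⟨hκ₁pos, (hequiv κ₁ hκ₁pos).2 hκ₁⟩, ?_⟩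
  rintro κ ⟨hκpos, hκeq⟩
  have hκ : F κ = -γ := (hequiv κ hκpos).1 hκeq
  by_contra hne
  rcases lt_or_gt_of_ne hne with h | h
  · have := hmono κ κ₁ hκpos.le h; rw [hκ, hκ₁] at this; exact lt_irrefl _ this
  · have := hmono κ₁ κ hκ₁pos.le h; rw [hκ, hκ₁] at this; exact lt_irrefl _ this
end

section
/- Let a,b>0, γ_* := −4(1/a + 1/b), and γ < γ_*. Then the equation γ/(2κ) = −coth(κa/2) − coth(κb/2) has exactly one root κ₂ in (0,∞). -/
open Real Set

private lemma cosh_le_one_add (x : ℝ) (hx : 0 ≤ x) :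
    Real.cosh x ≤ 1 + x * Real.sinh x := by
  have hmono : MonotoneOn (fun x => 1 + x * Real.sinh x - Real.cosh x) (Ici 0) := by
    apply monotoneOn_of_deriv_nonneg (convex_Ici 0)
    · exact (Continuous.sub (by continuity) Real.continuous_cosh).continuousOn
    · intro y _
      exact ((((hasDerivAt_id y).mul (Real.hasDerivAt_sinh y)).const_add 1).sub
        (Real.hasDerivAt_cosh y)).differentiableAt.differentiableWithinAt
    · intro y hy
      rw [interior_Ici] at hy
      have hd : HasDerivAt (fun x => 1 + x * Real.sinh x - Real.cosh x)
          (1 * Real.sinh y + y * Real.cosh y - Real.cosh y * Real.sinh y / Real.cosh y) y := by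
        have : Real.cosh y * Real.sinh y / Real.cosh y = Real.sinh y := by
          field_simp
        rw [this]
        exact (((hasDerivAt_id y).mul (Real.hasDerivAt_sinh y)).const_add 1).sub
          (Real.hasDerivAt_cosh y)
      rw [hd.deriv]
      have h1 : Real.cosh y * Real.sinh y / Real.cosh y = Real.sinh y := by field_simp
      rw [h1]
      have := Real.cosh_pos (x := y)
      have hy' : 0 < y := hy
      nlinarith
  have h := hmono (self_mem_Ici) (mem_Ici.mpr hx) hx
  simp only [Real.cosh_zero, Real.sinh_zero] at h
  linarith

private lemma g_strictMono :
    StrictMonoOn (fun x => x * Real.cosh x / Real.sinh x) (Ioi 0) := by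
  apply strictMonoOn_of_deriv_pos (convex_Ioi 0)
  · intro y hy
    exact ((continuous_id.mul Real.continuous_cosh).continuousAt.div
      Real.continuous_sinh.continuousAt (ne_of_gt (Real.sinh_pos_iff.mpr hy))).continuousWithinAt
  · intro y hy
    rw [interior_Ioi] at hy
    have hs := Real.sinh_pos_iff.mpr hy
    have hd : HasDerivAt (fun x => x * Real.cosh x / Real.sinh x)
        (((1 * Real.cosh y + y * Real.sinh y) * Real.sinh y -
          y * Real.cosh y * Real.cosh y) / Real.sinh y ^ 2) y :=
      ((hasDerivAt_id y).mul (Real.hasDerivAt_cosh y)).div (Real.hasDerivAt_sinh y)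
        (ne_of_gt hs)
    rw [hd.deriv]
    have hkey : y < Real.cosh y * Real.sinh y := by
      have h2 : 2 * y < Real.sinh (2 * y) := Real.self_lt_sinh_iff.mpr (by have hy2 : (0:ℝ) < y := hy; linarith)
      rw [Real.sinh_two_mul] at h2
      linarith
    have hnum : (1 * Real.cosh y + y * Real.sinh y) * Real.sinh y -
        y * Real.cosh y * Real.cosh y = Real.cosh y * Real.sinh y - y := by
      linear_combination (-y) * Real.cosh_sq y
    apply div_pos _ (pow_pos hs 2)
    rw [hnum]
    linarith

private lemma g_gt_self (x : ℝ) (hx : 0 < x) :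
    x < x * Real.cosh x / Real.sinh x := by
  have hs := Real.sinh_pos_iff.mpr hx
  rw [lt_div_iff₀ hs]
  have h1 : Real.sinh x < Real.cosh x := Real.sinh_lt_cosh x
  nlinarith

private lemma g_le (x : ℝ) (hx : 0 < x) :
    x * Real.cosh x / Real.sinh x ≤ 1 + x ^ 2 := by
  have hs := Real.sinh_pos_iff.mpr hx
  rw [div_le_iff₀ hs]
  have h1 : Real.cosh x ≤ 1 + x * Real.sinh x := cosh_le_one_add x hx.le
  have h2 : x ≤ Real.sinh x := (Real.self_le_sinh_iff).mpr hx.le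
  nlinarith

set_option maxHeartbeats 1000000 in
theorem stmt_5 (a b γ : ℝ) (ha : 0 < a) (hb : 0 < b)
    (hγ : γ < -4 * (1 / a + 1 / b)) :
    ∃! κ : ℝ, 0 < κ ∧ γ / (2 * κ) =
      -(Real.cosh (κ * a / 2) / Real.sinh (κ * a / 2)) -
        Real.cosh (κ * b / 2) / Real.sinh (κ * b / 2) := by
  set g : ℝ → ℝ := fun x => x * Real.cosh x / Real.sinh x with hg
  set H : ℝ → ℝ := fun κ => (4 / a) * g (κ * a / 2) + (4 / b) * g (κ * b / 2) with hH
  -- key equivalence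
  have hequiv : ∀ κ : ℝ, 0 < κ →
      ((γ / (2 * κ) = -(Real.cosh (κ * a / 2) / Real.sinh (κ * a / 2)) -
        Real.cosh (κ * b / 2) / Real.sinh (κ * b / 2)) ↔ H κ = -γ) := by
    intro κ hκ
    have hκa : 0 < κ * a / 2 := by positivity
    have hκb : 0 < κ * b / 2 := by positivity
    have hsa := Real.sinh_pos_iff.mpr hκa
    have hsb := Real.sinh_pos_iff.mpr hκb
    rw [div_eq_iff (by positivity : (2 : ℝ) * κ ≠ 0)]
    have hHa : (4 / a) * g (κ * a / 2) =
        2 * κ * (Real.cosh (κ * a / 2) / Real.sinh (κ * a / 2)) := by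
      simp only [hg]; field_simp; ring
    have hHb : (4 / b) * g (κ * b / 2) =
        2 * κ * (Real.cosh (κ * b / 2) / Real.sinh (κ * b / 2)) := by
      simp only [hg]; field_simp; ring
    constructor
    · intro h
      simp only [hH, hHa, hHb]
      rw [h]; ring
    · intro h
      simp only [hH, hHa, hHb] at h
      linarith
  -- H strictly monotone on Ioi 0
  have hmono : StrictMonoOn H (Ioi 0) := by
    intro x hx y hy hxy
    have hx' : (0 : ℝ) < x := hx
    have hy' : (0 : ℝ) < y := hy
    have h1 : g (x * a / 2) < g (y * a / 2) := by
      apply g_strictMono (mem_Ioi.mpr (by positivity)) (mem_Ioi.mpr (by positivity))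
      have h2 : 0 < a / 2 := by positivity
      calc x * a / 2 = x * (a / 2) := by ring
        _ < y * (a / 2) := mul_lt_mul_of_pos_right hxy h2
        _ = y * a / 2 := by ring
    have h2 : g (x * b / 2) < g (y * b / 2) := by
      apply g_strictMono (mem_Ioi.mpr (by positivity)) (mem_Ioi.mpr (by positivity))
      have h2 : 0 < b / 2 := by positivity
      calc x * b / 2 = x * (b / 2) := by ring
        _ < y * (b / 2) := mul_lt_mul_of_pos_right hxy h2
        _ = y * b / 2 := by ring
    have h4a : 0 < 4 / a := by positivity
    have h4b : 0 < 4 / b := by positivity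
    simp only [hH]
    nlinarith
  -- H continuous on Ioi 0
  have hgc : ∀ c : ℝ, 0 < c → ContinuousOn (fun x : ℝ => g (x * c / 2)) (Ioi 0) := by
    intro c hc
    simp only [hg]
    apply ContinuousOn.div
    · exact (by continuity :
        Continuous fun x : ℝ => (x * c / 2) * Real.cosh (x * c / 2)).continuousOn
    · exact (Real.continuous_sinh.comp (by continuity)).continuousOn
    · intro x hx
      have hx' : (0:ℝ) < x := hx
      exact ne_of_gt (Real.sinh_pos_iff.mpr (by positivity))
  have hcont : ContinuousOn H (Ioi 0) :=
    (continuousOn_const.mul (hgc a ha)).add (continuousOn_const.mul (hgc b hb))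
  have hγ' : γ < -(4 / a + 4 / b) := by
    have h : -4 * (1 / a + 1 / b) = -(4 / a + 4 / b) := by ring
    rw [h] at hγ; exact hγ
  have hε : 0 < -γ - (4 / a + 4 / b) := by linarith
  set ε := -γ - (4 / a + 4 / b) with hεdef
  have hγneg : 0 < -γ := by
    have h0 : 0 < 4 / a + 4 / b := by positivity
    linarith
  -- small point
  set κ₁ := min 1 (Real.sqrt (ε / (a + b)) / 2) with hκ₁def
  have hκ₁pos : 0 < κ₁ :=
    lt_min one_pos (by positivity)
  have hκ₁sq : (a + b) * κ₁ ^ 2 < ε := by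
    have h1 : κ₁ ≤ Real.sqrt (ε / (a + b)) / 2 := min_le_right _ _
    have h2 : κ₁ ^ 2 ≤ (Real.sqrt (ε / (a + b)) / 2) ^ 2 := by
      apply pow_le_pow_left₀ hκ₁pos.le h1
    have h3 : (Real.sqrt (ε / (a + b)) / 2) ^ 2 = ε / (a + b) / 4 := by
      rw [div_pow, Real.sq_sqrt (by positivity : (0:ℝ) ≤ ε / (a + b))]
      norm_num
    have h4 : κ₁ ^ 2 ≤ ε / (a + b) / 4 := by rw [h3] at h2; exact h2
    have h5 : 0 < ε / (a + b) := by positivity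
    calc (a + b) * κ₁ ^ 2 ≤ (a + b) * (ε / (a + b) / 4) := by
          apply mul_le_mul_of_nonneg_left h4 (by positivity)
      _ = ε / 4 := by field_simp
      _ < ε := div_lt_self hε (by norm_num)
  have hκ₁small : H κ₁ < -γ := by
    have hκa : 0 < κ₁ * a / 2 := by positivity
    have hκb : 0 < κ₁ * b / 2 := by positivity
    have h1 : g (κ₁ * a / 2) ≤ 1 + (κ₁ * a / 2) ^ 2 := g_le _ hκa
    have h2 : g (κ₁ * b / 2) ≤ 1 + (κ₁ * b / 2) ^ 2 := g_le _ hκb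
    have h4a : 0 < 4 / a := by positivity
    have h4b : 0 < 4 / b := by positivity
    have hHbound : H κ₁ ≤ (4 / a + 4 / b) + (a + b) * κ₁ ^ 2 := by
      simp only [hH]
      have e1 : (4 / a) * (1 + (κ₁ * a / 2) ^ 2) = 4 / a + a * κ₁ ^ 2 := by
        field_simp; ring
      have e2 : (4 / b) * (1 + (κ₁ * b / 2) ^ 2) = 4 / b + b * κ₁ ^ 2 := by
        field_simp; ring
      nlinarith
    have hlt : (4 / a + 4 / b) + (a + b) * κ₁ ^ 2 < -γ := by
      have := hκ₁sq
      simp only [hεdef] at this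
      linarith
    exact lt_of_le_of_lt hHbound hlt
  -- large point
  set κ₂ := max κ₁ (-γ / 4) with hκ₂def
  have hκ₂pos : 0 < κ₂ := lt_of_lt_of_le hκ₁pos (le_max_left _ _)
  have hκ₁₂ : κ₁ ≤ κ₂ := le_max_left _ _
  have hHκ : ∀ κ : ℝ, 0 < κ → 4 * κ < H κ := by
    intro κ hκ
    have hκa : 0 < κ * a / 2 := by positivity
    have hκb : 0 < κ * b / 2 := by positivity
    have h1 : κ * a / 2 < g (κ * a / 2) := g_gt_self _ hκa
    have h2 : κ * b / 2 < g (κ * b / 2) := g_gt_self _ hκb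
    have h4a : 0 < 4 / a := by positivity
    have h4b : 0 < 4 / b := by positivity
    have e1 : (4 / a) * (κ * a / 2) = 2 * κ := by field_simp; ring
    have e2 : (4 / b) * (κ * b / 2) = 2 * κ := by field_simp; ring
    simp only [hH]
    nlinarith
  have hκ₂big : -γ < H κ₂ := by
    have h1 : 4 * κ₂ < H κ₂ := hHκ κ₂ hκ₂pos
    have h2 : -γ / 4 ≤ κ₂ := le_max_right _ _
    linarith
  -- existence via IVT
  have hIcc : Icc κ₁ κ₂ ⊆ Ioi 0 := fun x hx => lt_of_lt_of_le hκ₁pos hx.1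
  have hIVT : -γ ∈ H '' Icc κ₁ κ₂ := by
    apply intermediate_value_Icc hκ₁₂ (hcont.mono hIcc)
    exact ⟨hκ₁small.le, hκ₂big.le⟩
  obtain ⟨κ, hκmem, hκeq⟩ := hIVT
  have hκpos : 0 < κ := hIcc hκmem
  refine ⟨κ, ⟨hκpos, (hequiv κ hκpos).mpr hκeq⟩, ?_⟩
  rintro y ⟨hypos, hyeq⟩
  have hyH : H y = -γ := (hequiv y hypos).mp hyeq
  exact hmono.injOn (mem_Ioi.mpr hypos) (mem_Ioi.mpr hκpos) (by rw [hyH, hκeq])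
end

section
/- Let a,b>0, γ∈ℝ, γ_* := −4(1/a+1/b), and define P_γ := {k>0 : sin(kb)=0, or (sin(kb)≠0 and |γ·sin(ka)/(2k) + sin(k(a+b))/sin(kb)| ≤ 1 + |sin(ka)/sin(kb)|)}. Then: (i) if γ_* < γ ≤ 0, the infimum of P_γ equals 0; (ii) if γ > 0 or γ ≤ γ_*, the infimum of P_γ is strictly positive. -/
open Real Set


-- membership lemma, case (i)
set_option maxHeartbeats 2000000 in
lemma band_mem (a b γ k : ℝ) (ha : 0 < a) (hb : 0 < b) (hγ0 : γ ≤ 0)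
    (hk : 0 < k) (hk1 : k * (a + b) ≤ 1)
    (hk2 : k ^ 2 * ((a + b) * (a ^ 2 + b ^ 2)) < γ * (a * b) + 4 * (a + b)) :
    |γ * Real.sin (k * a) / (2 * k) + Real.sin (k * (a + b)) / Real.sin (k * b)| ≤
      1 + |Real.sin (k * a) / Real.sin (k * b)| := by
  have hApos : 0 < k * a := by positivity
  have hBpos : 0 < k * b := by positivity
  have hA1 : k * a ≤ 1 := by nlinarith
  have hB1 : k * b ≤ 1 := by nlinarith
  have hpi : (1 : ℝ) < π := by linarith [Real.pi_gt_three]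
  have hsA : 0 < Real.sin (k * a) := Real.sin_pos_of_pos_of_lt_pi hApos (by linarith)
  have hsB : 0 < Real.sin (k * b) := Real.sin_pos_of_pos_of_lt_pi hBpos (by linarith)
  have h2k : (0 : ℝ) < 2 * k := by linarith
  have hexp : Real.sin (k * (a + b)) =
      Real.sin (k * a) * Real.cos (k * b) + Real.cos (k * a) * Real.sin (k * b) := by
    rw [mul_add, Real.sin_add]
  have lbA : k * a - (k * a) ^ 3 / 4 < Real.sin (k * a) := by have := Real.sin_gt_sub_cube hApos; linarith [pow_pos hApos 3]
  have lbB : k * b - (k * b) ^ 3 / 4 < Real.sin (k * b) := by have := Real.sin_gt_sub_cube hBpos; linarith [pow_pos hBpos 3]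
  have ubA : Real.sin (k * a) ≤ k * a := Real.sin_le hApos.le
  have ubB : Real.sin (k * b) ≤ k * b := Real.sin_le hBpos.le
  have cAlb : 1 - (k * a) ^ 2 / 2 ≤ Real.cos (k * a) := Real.one_sub_sq_div_two_le_cos
  have cBlb : 1 - (k * b) ^ 2 / 2 ≤ Real.cos (k * b) := Real.one_sub_sq_div_two_le_cos
  have cAub : Real.cos (k * a) ≤ 1 := Real.cos_le_one _
  have cBub : Real.cos (k * b) ≤ 1 := Real.cos_le_one _
  rw [abs_of_pos (div_pos hsA hsB), abs_le]
  constructor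
  · -- lower bound
    rw [div_add_div _ _ (ne_of_gt h2k) (ne_of_gt hsB), le_div_iff₀ (by positivity)]
    have hl : -(1 + Real.sin (k * a) / Real.sin (k * b)) * (2 * k * Real.sin (k * b)) =
        -(2 * k * Real.sin (k * b)) - 2 * k * Real.sin (k * a) := by
      field_simp; ring
    rw [hl, hexp]
    have hprod : Real.sin (k * a) * Real.sin (k * b) ≤ (k * a) * (k * b) :=
      mul_le_mul ubA ubB hsB.le hApos.le
    have h1 : γ * ((k * a) * (k * b)) ≤ γ * (Real.sin (k * a) * Real.sin (k * b)) :=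
      mul_le_mul_of_nonpos_left hprod hγ0
    have h2 : (k * a - (k * a) ^ 3 / 4) * (2 - (k * b) ^ 2 / 2) ≤
        Real.sin (k * a) * (1 + Real.cos (k * b)) :=
      mul_le_mul lbA.le (by linarith) (by nlinarith) hsA.le
    have h3 : (k * b - (k * b) ^ 3 / 4) * (2 - (k * a) ^ 2 / 2) ≤
        Real.sin (k * b) * (1 + Real.cos (k * a)) :=
      mul_le_mul lbB.le (by linarith) (by nlinarith) hsB.le
    have h2' := mul_le_mul_of_nonneg_left h2 h2k.le
    have h3' := mul_le_mul_of_nonneg_left h3 h2k.le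
    have h4 : 0 < k ^ 2 * ((γ * (a * b) + 4 * (a + b)) - k ^ 2 * ((a + b) * (a ^ 2 + b ^ 2))) :=
      mul_pos (by positivity) (sub_pos.mpr hk2)
    have h5 : (0:ℝ) ≤ k ^ 6 * (a ^ 3 * b ^ 2 + a ^ 2 * b ^ 3) / 4 := by positivity
    have h6 : γ * ((k * a) * (k * b)) +
        2 * k * ((k * a - (k * a) ^ 3 / 4) * (2 - (k * b) ^ 2 / 2)) +
        2 * k * ((k * b - (k * b) ^ 3 / 4) * (2 - (k * a) ^ 2 / 2)) =
        k ^ 2 * ((γ * (a * b) + 4 * (a + b)) - k ^ 2 * ((a + b) * (a ^ 2 + b ^ 2))) +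
        k ^ 6 * (a ^ 3 * b ^ 2 + a ^ 2 * b ^ 3) / 4 := by ring
    linarith [h1, h2', h3', h4, h5, h6]
  · -- upper bound
    rw [div_add_div _ _ (ne_of_gt h2k) (ne_of_gt hsB), div_le_iff₀ (by positivity)]
    have hr : (1 + Real.sin (k * a) / Real.sin (k * b)) * (2 * k * Real.sin (k * b)) =
        2 * k * Real.sin (k * b) + 2 * k * Real.sin (k * a) := by
      field_simp
    rw [hr, hexp]
    have u1 : γ * Real.sin (k * a) * Real.sin (k * b) ≤ 0 := by
      nlinarith [mul_nonneg hsA.le hsB.le]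
    have u2 : 2 * k * (Real.sin (k * a) * Real.cos (k * b)) ≤ 2 * k * Real.sin (k * a) := by
      nlinarith [mul_pos h2k hsA]
    have u3 : 2 * k * (Real.cos (k * a) * Real.sin (k * b)) ≤ 2 * k * Real.sin (k * b) := by
      nlinarith [mul_pos h2k hsB]
    linarith [u1, u2, u3]
set_option maxHeartbeats 2000000 in
lemma band_fail_pos (a b γ k : ℝ) (ha : 0 < a) (hb : 0 < b) (hγ : 0 < γ)
    (hk : 0 < k) (hk1 : k * (a + b) ≤ 1)
    (hk2 : k ^ 2 * (16 * (a + b)) < 9 * γ) :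
    ¬ (|γ * Real.sin (k * a) / (2 * k) + Real.sin (k * (a + b)) / Real.sin (k * b)| ≤
      1 + |Real.sin (k * a) / Real.sin (k * b)|) := by
  have hApos : 0 < k * a := by positivity
  have hBpos : 0 < k * b := by positivity
  have hA1 : k * a ≤ 1 := by nlinarith
  have hB1 : k * b ≤ 1 := by nlinarith
  have hpi : (1 : ℝ) < π := by linarith [Real.pi_gt_three]
  have hsA : 0 < Real.sin (k * a) := Real.sin_pos_of_pos_of_lt_pi hApos (by linarith)
  have hsB : 0 < Real.sin (k * b) := Real.sin_pos_of_pos_of_lt_pi hBpos (by linarith)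
  have h2k : (0 : ℝ) < 2 * k := by linarith
  have hexp : Real.sin (k * (a + b)) =
      Real.sin (k * a) * Real.cos (k * b) + Real.cos (k * a) * Real.sin (k * b) := by
    rw [mul_add, Real.sin_add]
  intro habs
  rw [abs_of_pos (div_pos hsA hsB)] at habs
  -- we show 1 + sin(ka)/sin(kb) < f, contradicting f ≤ |f| ≤ 1 + ...
  have hstrict : 1 + Real.sin (k * a) / Real.sin (k * b) <
      γ * Real.sin (k * a) / (2 * k) + Real.sin (k * (a + b)) / Real.sin (k * b) := by
    rw [div_add_div _ _ (ne_of_gt h2k) (ne_of_gt hsB), lt_div_iff₀ (by positivity)]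
    have hr : (1 + Real.sin (k * a) / Real.sin (k * b)) * (2 * k * Real.sin (k * b)) =
        2 * k * Real.sin (k * b) + 2 * k * Real.sin (k * a) := by
      field_simp
    rw [hr, hexp]
    have lbA : k * a - (k * a) ^ 3 / 4 < Real.sin (k * a) := by have := Real.sin_gt_sub_cube hApos; linarith [pow_pos hApos 3]
    have lbB : k * b - (k * b) ^ 3 / 4 < Real.sin (k * b) := by have := Real.sin_gt_sub_cube hBpos; linarith [pow_pos hBpos 3]
    have ubA : Real.sin (k * a) ≤ k * a := Real.sin_le hApos.le
    have ubB : Real.sin (k * b) ≤ k * b := Real.sin_le hBpos.le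
    have cAlb : 1 - (k * a) ^ 2 / 2 ≤ Real.cos (k * a) := Real.one_sub_sq_div_two_le_cos
    have cBlb : 1 - (k * b) ^ 2 / 2 ≤ Real.cos (k * b) := Real.one_sub_sq_div_two_le_cos
    have cAub : Real.cos (k * a) ≤ 1 := Real.cos_le_one _
    have cBub : Real.cos (k * b) ≤ 1 := Real.cos_le_one _
    have g1 : 3 / 4 * (k * a) ≤ k * a - (k * a) ^ 3 / 4 := by nlinarith
    have g1b : 3 / 4 * (k * b) ≤ k * b - (k * b) ^ 3 / 4 := by nlinarith
    have g2 : (3 / 4 * (k * a)) * (3 / 4 * (k * b)) ≤ Real.sin (k * a) * Real.sin (k * b) :=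
      mul_le_mul (by linarith) (by linarith) (by positivity) hsA.le
    have g3 : γ * ((3 / 4 * (k * a)) * (3 / 4 * (k * b))) ≤
        γ * (Real.sin (k * a) * Real.sin (k * b)) := mul_le_mul_of_nonneg_left g2 hγ.le
    have g4 : Real.sin (k * a) * (1 - Real.cos (k * b)) ≤ (k * a) * ((k * b) ^ 2 / 2) :=
      mul_le_mul ubA (by linarith) (by linarith) hApos.le
    have g5 : Real.sin (k * b) * (1 - Real.cos (k * a)) ≤ (k * b) * ((k * a) ^ 2 / 2) :=
      mul_le_mul ubB (by linarith) (by linarith) hBpos.le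
    have g4' := mul_le_mul_of_nonneg_left g4 h2k.le
    have g5' := mul_le_mul_of_nonneg_left g5 h2k.le
    have g6 : 0 < k ^ 2 * (a * b) / 16 * (9 * γ - k ^ 2 * (16 * (a + b))) :=
      mul_pos (by positivity) (sub_pos.mpr hk2)
    have g7 : γ * ((3 / 4 * (k * a)) * (3 / 4 * (k * b))) -
        2 * k * ((k * a) * ((k * b) ^ 2 / 2)) - 2 * k * ((k * b) * ((k * a) ^ 2 / 2)) =
        k ^ 2 * (a * b) / 16 * (9 * γ - k ^ 2 * (16 * (a + b))) := by ring
    linarith [g3, g4', g5', g6, g7]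
  have hle := le_abs_self (γ * Real.sin (k * a) / (2 * k) +
      Real.sin (k * (a + b)) / Real.sin (k * b))
  linarith
set_option maxHeartbeats 2000000 in
lemma band_fail_neg (a b γ k : ℝ) (ha : 0 < a) (hb : 0 < b)
    (hγ : γ ≤ -4 * (1 / a + 1 / b)) (hk : 0 < k) (hk1 : k * (a + b) < π) :
    ¬ (|γ * Real.sin (k * a) / (2 * k) + Real.sin (k * (a + b)) / Real.sin (k * b)| ≤
      1 + |Real.sin (k * a) / Real.sin (k * b)|) := by
  have hApos : 0 < k * a := by positivity
  have hBpos : 0 < k * b := by positivity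
  have hsA : 0 < Real.sin (k * a) := Real.sin_pos_of_pos_of_lt_pi hApos (by nlinarith)
  have hsB : 0 < Real.sin (k * b) := Real.sin_pos_of_pos_of_lt_pi hBpos (by nlinarith)
  have h2k : (0 : ℝ) < 2 * k := by linarith
  set u := k * a / 2 with hu_def
  set v := k * b / 2 with hv_def
  have hu : 0 < u := by positivity
  have hv : 0 < v := by positivity
  have huv : u + v < π / 2 := by rw [hu_def, hv_def]; nlinarith
  have hu2 : u < π / 2 := by linarith
  have hv2 : v < π / 2 := by linarith
  have hpi := Real.pi_pos
  have hsu : 0 < Real.sin u := Real.sin_pos_of_pos_of_lt_pi hu (by linarith)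
  have hsv : 0 < Real.sin v := Real.sin_pos_of_pos_of_lt_pi hv (by linarith)
  have hcu : 0 < Real.cos u := Real.cos_pos_of_mem_Ioo ⟨by linarith, hu2⟩
  have hcv : 0 < Real.cos v := Real.cos_pos_of_mem_Ioo ⟨by linarith, hv2⟩
  have t1 : u * Real.cos u < Real.sin u := by
    have := Real.lt_tan hu hu2
    rw [Real.tan_eq_sin_div_cos, lt_div_iff₀ hcu] at this
    linarith
  have t2 : v * Real.cos v < Real.sin v := by
    have := Real.lt_tan hv hv2
    rw [Real.tan_eq_sin_div_cos, lt_div_iff₀ hcv] at this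
    linarith
  -- γ * (u*v) ≤ -(2*k)*(u+v)
  have hγab : γ * (a * b) ≤ -4 * (b + a) := by
    have h7 : γ * (a * b) ≤ -4 * (1 / a + 1 / b) * (a * b) :=
      mul_le_mul_of_nonneg_right hγ (by positivity)
    have h8 : -4 * (1 / a + 1 / b) * (a * b) = -4 * (b + a) := by field_simp
    linarith
  have hγuv : γ * (u * v) ≤ -(2 * k) * (u + v) := by
    have h9 : u * v = k ^ 2 / 4 * (a * b) := by rw [hu_def, hv_def]; ring
    have h10 : -(2 * k) * (u + v) = k ^ 2 / 4 * (-4 * (b + a)) := by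
      rw [hu_def, hv_def]; ring
    rw [h9, h10]
    nlinarith [mul_le_mul_of_nonneg_left hγab (by positivity : (0:ℝ) ≤ k ^ 2 / 4)]
  -- key strict inequality
  have hkey : γ * (Real.sin u * Real.sin v) +
      2 * k * (Real.sin u * Real.cos v + Real.cos u * Real.sin v) < 0 := by
    have m1 : (u * Real.cos u) * (v * Real.sin v) < Real.sin u * (v * Real.sin v) :=
      mul_lt_mul_of_pos_right t1 (by positivity)
    have m2 : (v * Real.cos v) * (u * Real.sin u) < Real.sin v * (u * Real.sin u) :=
      mul_lt_mul_of_pos_right t2 (by positivity)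
    have m3 : γ * (u * v) * (Real.sin u * Real.sin v) ≤
        -(2 * k) * (u + v) * (Real.sin u * Real.sin v) :=
      mul_le_mul_of_nonneg_right hγuv (by positivity)
    have m1' := mul_lt_mul_of_pos_left m1 h2k
    have m2' := mul_lt_mul_of_pos_left m2 h2k
    have hkey' : (u * v) * (γ * (Real.sin u * Real.sin v) +
        2 * k * (Real.sin u * Real.cos v + Real.cos u * Real.sin v)) < 0 := by nlinarith
    nlinarith [mul_pos hu hv]
  -- half-angle identities
  have hA : Real.sin (k * a) = 2 * Real.sin u * Real.cos u := by
    rw [show k * a = 2 * u by rw [hu_def]; ring, Real.sin_two_mul]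
  have hB : Real.sin (k * b) = 2 * Real.sin v * Real.cos v := by
    rw [show k * b = 2 * v by rw [hv_def]; ring, Real.sin_two_mul]
  have pyu := Real.sin_sq_add_cos_sq u
  have pyv := Real.sin_sq_add_cos_sq v
  have hS : Real.sin (k * (a + b)) = 2 * (Real.sin u * Real.cos v + Real.cos u * Real.sin v) *
      (Real.cos u * Real.cos v - Real.sin u * Real.sin v) := by
    rw [show k * (a + b) = 2 * (u + v) by rw [hu_def, hv_def]; ring, Real.sin_two_mul,
      Real.sin_add, Real.cos_add]
  intro habs
  rw [abs_of_pos (div_pos hsA hsB)] at habs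
  have hstrict : γ * Real.sin (k * a) / (2 * k) + Real.sin (k * (a + b)) / Real.sin (k * b) <
      -(1 + Real.sin (k * a) / Real.sin (k * b)) := by
    rw [div_add_div _ _ (ne_of_gt h2k) (ne_of_gt hsB), div_lt_iff₀ (by positivity)]
    have hl : -(1 + Real.sin (k * a) / Real.sin (k * b)) * (2 * k * Real.sin (k * b)) =
        -(2 * k * Real.sin (k * b)) - 2 * k * Real.sin (k * a) := by
      field_simp; ring
    rw [hl, hA, hB, hS]
    -- goal: γ * (2 su cu) * (2 sv cv) + 2*k* (2(sucv+cusv)(cucv - susv)) <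
    --       -(2k * 2 sv cv) - 2k*(2 su cu)
    -- which equals 4 cu cv * hkey-expression via Pythagoras
    have hfin : (4 * Real.cos u * Real.cos v) * (γ * (Real.sin u * Real.sin v) +
        2 * k * (Real.sin u * Real.cos v + Real.cos u * Real.sin v)) < 0 :=
      mul_neg_of_pos_of_neg (by positivity) hkey
    nlinarith [hfin, pyu, pyv, mul_pos h2k (mul_pos hsu hcu), mul_pos h2k (mul_pos hsv hcv)]
  have hge := neg_abs_le (γ * Real.sin (k * a) / (2 * k) +
      Real.sin (k * (a + b)) / Real.sin (k * b))
  have : -(1 + Real.sin (k * a) / Real.sin (k * b)) ≤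
      γ * Real.sin (k * a) / (2 * k) + Real.sin (k * (a + b)) / Real.sin (k * b) := by
    linarith [neg_le_neg habs, hge]
  linarith

theorem stmt_7 (a b γ : ℝ) (ha : 0 < a) (hb : 0 < b)
    (P : Set ℝ)
    (hP : P = {k : ℝ | 0 < k ∧ (Real.sin (k * b) = 0 ∨
      (Real.sin (k * b) ≠ 0 ∧
        |γ * Real.sin (k * a) / (2 * k) + Real.sin (k * (a + b)) / Real.sin (k * b)| ≤
          1 + |Real.sin (k * a) / Real.sin (k * b)|))}) :
    (-4 * (1 / a + 1 / b) < γ → γ ≤ 0 → sInf P = 0) ∧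
    ((0 < γ ∨ γ ≤ -4 * (1 / a + 1 / b)) → 0 < sInf P) := by
  have hπ3 := Real.pi_gt_three
  constructor
  · intro hγ1 hγ0
    have hδ : 0 < γ * (a * b) + 4 * (a + b) := by
      have h7 : -4 * (1 / a + 1 / b) * (a * b) < γ * (a * b) :=
        mul_lt_mul_of_pos_right hγ1 (by positivity)
      have h8 : -4 * (1 / a + 1 / b) * (a * b) = -4 * (b + a) := by field_simp
      linarith
    have hQ : 0 < (a + b) * (a ^ 2 + b ^ 2) := by positivity
    set ε := min ((a + b)⁻¹)
      (Real.sqrt ((γ * (a * b) + 4 * (a + b)) / ((a + b) * (a ^ 2 + b ^ 2)))) with hεdef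
    have hε : 0 < ε := lt_min (by positivity) (Real.sqrt_pos.mpr (div_pos hδ hQ))
    have hmem : ∀ k : ℝ, 0 < k → k < ε → k ∈ P := by
      intro k hk hkε
      have hk1 : k * (a + b) ≤ 1 := by
        have h1 := lt_of_lt_of_le hkε (min_le_left _ _)
        have h2 := mul_lt_mul_of_pos_right h1 (show (0:ℝ) < a + b by linarith)
        rw [inv_mul_cancel₀ (by positivity : a + b ≠ 0)] at h2
        exact h2.le
      have hk2 : k ^ 2 * ((a + b) * (a ^ 2 + b ^ 2)) < γ * (a * b) + 4 * (a + b) := by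
        have h2 := lt_of_lt_of_le hkε (min_le_right _ _)
        have h3 := (Real.lt_sqrt hk.le).mp h2
        exact (lt_div_iff₀ hQ).mp h3
      have hsB : 0 < Real.sin (k * b) :=
        Real.sin_pos_of_pos_of_lt_pi (by positivity) (by nlinarith [mul_pos hk ha])
      rw [hP]
      exact ⟨hk, Or.inr ⟨ne_of_gt hsB, band_mem a b γ k ha hb hγ0 hk hk1 hk2⟩⟩
    have hPsub : ∀ x ∈ P, 0 < x := fun x hx => by rw [hP] at hx; exact hx.1
    have hbdd : BddBelow P := ⟨0, fun x hx => (hPsub x hx).le⟩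
    have hne : (ε / 2) ∈ P := hmem _ (by linarith) (by linarith)
    apply le_antisymm
    · by_contra hcon
      push_neg at hcon
      have hkpos : 0 < min (ε / 2) (sInf P / 2) := lt_min (by linarith) (by linarith)
      have hkmem : min (ε / 2) (sInf P / 2) ∈ P :=
        hmem _ hkpos (lt_of_le_of_lt (min_le_left _ _) (by linarith))
      have h4 := csInf_le hbdd hkmem
      have h5 := min_le_right (ε / 2) (sInf P / 2)
      linarith
    · exact le_csInf ⟨ε / 2, hne⟩ (fun x hx => (hPsub x hx).le)
  · intro hcase
    have hπb : (π / b) ∈ P := by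
      rw [hP]
      refine ⟨by positivity, Or.inl ?_⟩
      rw [div_mul_cancel₀ _ (ne_of_gt hb), Real.sin_pi]
    obtain ⟨ε, hε, hfail⟩ : ∃ ε : ℝ, 0 < ε ∧ ∀ k : ℝ, 0 < k → k < ε → k ∉ P := by
      rcases hcase with hγ | hγ
      · refine ⟨min ((a + b)⁻¹) (Real.sqrt (9 * γ / (16 * (a + b)))),
          lt_min (by positivity) (Real.sqrt_pos.mpr (div_pos (by linarith) (by positivity))), ?_⟩
        intro k hk hkε hkP
        have hk1 : k * (a + b) ≤ 1 := by
          have h1 := lt_of_lt_of_le hkε (min_le_left _ _)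
          have h2 := mul_lt_mul_of_pos_right h1 (show (0:ℝ) < a + b by linarith)
          rw [inv_mul_cancel₀ (by positivity : a + b ≠ 0)] at h2
          exact h2.le
        have hk2 : k ^ 2 * (16 * (a + b)) < 9 * γ := by
          have h2 := lt_of_lt_of_le hkε (min_le_right _ _)
          have h3 := (Real.lt_sqrt hk.le).mp h2
          exact (lt_div_iff₀ (by positivity)).mp h3
        have hsB : 0 < Real.sin (k * b) :=
          Real.sin_pos_of_pos_of_lt_pi (by positivity) (by nlinarith [mul_pos hk ha])
        rw [hP] at hkP
        rcases hkP.2 with h0 | h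
        · exact (ne_of_gt hsB) h0
        · exact band_fail_pos a b γ k ha hb hγ hk hk1 hk2 h.2
      · refine ⟨π / (a + b), by positivity, ?_⟩
        intro k hk hkε hkP
        have hk1 : k * (a + b) < π := by
          have h2 := mul_lt_mul_of_pos_right hkε (show (0:ℝ) < a + b by linarith)
          rwa [div_mul_cancel₀ _ (by positivity : a + b ≠ 0)] at h2
        have hsB : 0 < Real.sin (k * b) :=
          Real.sin_pos_of_pos_of_lt_pi (by positivity) (by nlinarith [mul_pos hk ha])
        rw [hP] at hkP
        rcases hkP.2 with h0 | h
        · exact (ne_of_gt hsB) h0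
        · exact band_fail_neg a b γ k ha hb hγ hk hk1 h.2
    refine lt_of_lt_of_le hε (le_csInf ⟨π / b, hπb⟩ ?_)
    intro x hx
    by_contra hcon
    push_neg at hcon
    have hx0 : 0 < x := by rw [hP] at hx; exact hx.1
    exact hfail x hx0 hcon hx
end

section
/- Let f,g∈ℝ with |f|>1. There exists a not-identically-zero square-summable sequence (ν_j)_{j∈ℤ} of real numbers satisfying ν_{j+1} − 2f·ν_j + ν_{j−1} = 0 for all j≠0 and ν_1 − 2g·ν_0 + ν_{−1} = 0, if and only if either (f < −1 and g = f + √(f²−1)) or (f > 1 and g = f − √(f²−1)). -/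
open Real Filter Topology

private lemma sq_tendsto_zero (u : ℕ → ℝ)
    (h : Tendsto (fun n => u n ^ 2) atTop (nhds 0)) :
    Tendsto u atTop (nhds 0) := by
  rw [tendsto_zero_iff_abs_tendsto_zero]
  have h2 : Tendsto (fun n => Real.sqrt (u n ^ 2)) atTop (nhds (Real.sqrt 0)) := h.sqrt
  simpa [Real.sqrt_sq_eq_abs, Function.comp_def] using h2

private lemma solve_rec (f r : ℝ) (hroot : r ^ 2 - 2 * f * r + 1 = 0)
    (hr1 : |r| < 1) (u : ℕ → ℝ)
    (hrec : ∀ n : ℕ, u (n + 2) = 2 * f * u (n + 1) - u n)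
    (hlim : Tendsto u atTop (nhds 0)) :
    ∀ n, u n = u 0 * r ^ n := by
  have hr0 : r ≠ 0 := by
    intro h; rw [h] at hroot; norm_num at hroot
  have habs : (0:ℝ) < |r| := abs_pos.mpr hr0
  obtain ⟨r', hr'⟩ : ∃ x : ℝ, x = r⁻¹ := ⟨_, rfl⟩
  have hr'abs : 1 < |r'| := by
    rw [hr', abs_inv]
    exact (one_lt_inv₀ habs).mpr hr1
  have hne : r' - r ≠ 0 := by
    intro h
    have hrr : r' = r := by linarith
    rw [hrr] at hr'abs; linarith
  obtain ⟨B, hB⟩ : ∃ x : ℝ, x = (u 1 - r * u 0) / (r' - r) := ⟨_, rfl⟩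
  obtain ⟨A, hA⟩ : ∃ x : ℝ, x = u 0 - B := ⟨_, rfl⟩
  have hB' : B * (r' - r) = u 1 - r * u 0 := by
    rw [hB]; field_simp
  have hroot' : r' ^ 2 - 2 * f * r' + 1 = 0 := by
    rw [hr']
    field_simp
    linear_combination hroot
  have key : ∀ n, u n = A * r ^ n + B * r' ^ n ∧
      u (n + 1) = A * r ^ (n + 1) + B * r' ^ (n + 1) := by
    intro n
    induction n with
    | zero =>
      constructor
      · rw [hA]; simp
      · simp only [pow_one, zero_add]
        rw [hA]
        linear_combination -hB'
    | succ n ih =>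
      refine ⟨ih.2, ?_⟩
      rw [hrec n, ih.1, ih.2]
      linear_combination (-(A * r ^ n)) * hroot + (-(B * r' ^ n)) * hroot'
  have hAB : ∀ n, u n = A * r ^ n + B * r' ^ n := fun n => (key n).1
  have hrpow : Tendsto (fun n : ℕ => A * r ^ n) atTop (nhds 0) := by
    simpa using (tendsto_pow_atTop_nhds_zero_of_abs_lt_one hr1).const_mul A
  have hBr : Tendsto (fun n : ℕ => B * r' ^ n) atTop (nhds 0) := by
    have heq : (fun n : ℕ => B * r' ^ n) = fun n => u n - A * r ^ n := by
      funext n; rw [hAB n]; ring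
    rw [heq]
    simpa using hlim.sub hrpow
  have hB0 : B = 0 := by
    by_contra hB0
    have h2 : Tendsto (fun n : ℕ => |B * r' ^ n|) atTop atTop := by
      have h3 : Tendsto (fun n : ℕ => |r'| ^ n) atTop atTop :=
        tendsto_pow_atTop_atTop_of_one_lt hr'abs
      have h4 := h3.const_mul_atTop (abs_pos.mpr hB0)
      simpa [abs_mul, abs_pow] using h4
    have habs0 : Tendsto (fun n : ℕ => |B * r' ^ n|) atTop (nhds 0) := by
      simpa using hBr.abs
    exact habs0.not_tendsto (disjoint_nhds_atTop 0) h2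
  intro n
  have h5 := hAB n
  rw [hB0] at h5
  rw [h5, hA, hB0]
  ring

private lemma forward (f g r : ℝ) (hroot : r ^ 2 - 2 * f * r + 1 = 0) (hr1 : |r| < 1)
    (hE : ∃ ν : ℤ → ℝ, ν ≠ 0 ∧ Summable (fun j : ℤ => (ν j) ^ 2) ∧
        (∀ j : ℤ, j ≠ 0 → ν (j + 1) - 2 * f * ν j + ν (j - 1) = 0) ∧
        ν 1 - 2 * g * ν 0 + ν (-1) = 0) : g = r := by
  obtain ⟨ν, hν, hsum, hrec, h0⟩ := hE
  have hcof : Tendsto (fun j : ℤ => ν j ^ 2) cofinite (nhds 0) :=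
    hsum.tendsto_cofinite_zero
  -- positive side
  have hu : Tendsto (fun n : ℕ => ν n ^ 2) atTop (nhds 0) := by
    rw [← Nat.cofinite_eq_atTop]
    exact hcof.comp ((Nat.cast_injective : Function.Injective ((↑) : ℕ → ℤ)).tendsto_cofinite)
  have hv : Tendsto (fun n : ℕ => ν (-(n : ℤ)) ^ 2) atTop (nhds 0) := by
    rw [← Nat.cofinite_eq_atTop]
    have hinj : Function.Injective (fun n : ℕ => -(n : ℤ)) := by
      intro a b hab
      simp only [neg_inj, Int.natCast_inj] at hab
      exact hab
    exact hcof.comp hinj.tendsto_cofinite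
  have hurec : ∀ n : ℕ, ν ((n : ℤ) + 2) = 2 * f * ν ((n : ℤ) + 1) - ν n := by
    intro n
    have h1 := hrec ((n : ℤ) + 1) (by positivity)
    have e1 : (n : ℤ) + 1 + 1 = (n : ℤ) + 2 := by ring
    have e2 : (n : ℤ) + 1 - 1 = (n : ℤ) := by ring
    rw [e1, e2] at h1
    linarith
  have hvrec : ∀ n : ℕ, ν (-((n : ℤ) + 2)) = 2 * f * ν (-((n : ℤ) + 1)) - ν (-(n : ℤ)) := by
    intro n
    have h1 := hrec (-((n : ℤ) + 1)) (by simp; omega)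
    have e1 : -((n : ℤ) + 1) + 1 = -(n : ℤ) := by ring
    have e2 : -((n : ℤ) + 1) - 1 = -((n : ℤ) + 2) := by ring
    rw [e1, e2] at h1
    linarith
  have hu' := solve_rec f r hroot hr1 (fun n => ν n)
    (by intro n; push_cast; exact hurec n) (sq_tendsto_zero _ hu)
  have hv' := solve_rec f r hroot hr1 (fun n => ν (-(n : ℤ)))
    (by intro n; push_cast; exact hvrec n) (sq_tendsto_zero _ hv)
  have hν0 : ν 0 ≠ 0 := by
    intro h00
    apply hν
    funext j
    show ν j = 0
    obtain ⟨n, rfl | rfl⟩ := Int.eq_nat_or_neg j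
    · have h := hu' n
      simp only [Nat.cast_zero] at h
      simp [h, h00]
    · have h := hv' n
      simp only [Nat.cast_zero, neg_zero] at h
      simp [h, h00]
  have h1 : ν 1 = ν 0 * r := by
    have := hu' 1
    simpa using this
  have h2 : ν (-1) = ν 0 * r := by
    have := hv' 1
    simpa using this
  rw [h1, h2] at h0
  have h3 : 2 * ν 0 * (r - g) = 0 := by linear_combination h0
  rcases mul_eq_zero.mp h3 with h4 | h4
  · rcases mul_eq_zero.mp h4 with h5 | h5
    · norm_num at h5
    · exact absurd h5 hν0
  · linarith

private lemma construct (f g r : ℝ) (hroot : r ^ 2 - 2 * f * r + 1 = 0) (hr1 : |r| < 1)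
    (hg : g = r) :
    ∃ ν : ℤ → ℝ, ν ≠ 0 ∧ Summable (fun j : ℤ => (ν j) ^ 2) ∧
        (∀ j : ℤ, j ≠ 0 → ν (j + 1) - 2 * f * ν j + ν (j - 1) = 0) ∧
        ν 1 - 2 * g * ν 0 + ν (-1) = 0 := by
  refine ⟨fun j => r ^ j.natAbs, ?_, ?_, ?_, ?_⟩
  · intro h
    have := congrFun h 0
    norm_num at this
  · have hr2 : r ^ 2 < 1 := by
      nlinarith [sq_abs r, abs_nonneg r]
    have hgeo : Summable (fun n : ℕ => (r ^ 2) ^ n) :=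
      summable_geometric_of_lt_one (sq_nonneg r) hr2
    have heq : ∀ j : ℤ, ((fun j : ℤ => r ^ j.natAbs) j) ^ 2 = (r ^ 2) ^ j.natAbs := by
      intro j
      rw [← pow_mul, ← pow_mul, mul_comm]
    simp only [heq]
    apply Summable.of_nat_of_neg
    · simpa using hgeo
    · simpa using hgeo
  · intro j hj
    rcases lt_or_gt_of_ne hj with hneg | hpos
    · obtain ⟨n, hn⟩ : ∃ n : ℕ, j = -((n : ℤ) + 1) := by
        refine ⟨(-j - 1).toNat, ?_⟩
        omega
      subst hn
      have e1 : (-((n:ℤ) + 1) + 1).natAbs = n := by omega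
      have e2 : (-((n:ℤ) + 1)).natAbs = n + 1 := by omega
      have e3 : (-((n:ℤ) + 1) - 1).natAbs = n + 2 := by omega
      simp only [e1, e2, e3]
      linear_combination (r ^ n) * hroot
    · obtain ⟨n, hn⟩ : ∃ n : ℕ, j = (n : ℤ) + 1 := by
        refine ⟨(j - 1).toNat, ?_⟩
        omega
      subst hn
      have e1 : ((n:ℤ) + 1 + 1).natAbs = n + 2 := by omega
      have e2 : ((n:ℤ) + 1).natAbs = n + 1 := by omega
      have e3 : ((n:ℤ) + 1 - 1).natAbs = n := by omega
      simp only [e1, e2, e3]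
      linear_combination (r ^ n) * hroot
  · have e1 : (1 : ℤ).natAbs = 1 := rfl
    have e2 : (0 : ℤ).natAbs = 0 := rfl
    have e3 : (-1 : ℤ).natAbs = 1 := rfl
    simp only [e1, e2, e3, hg]
    ring

theorem stmt_8 (f g : ℝ) (hf : 1 < |f|) :
    (∃ ν : ℤ → ℝ, ν ≠ 0 ∧ Summable (fun j : ℤ => (ν j) ^ 2) ∧
        (∀ j : ℤ, j ≠ 0 → ν (j + 1) - 2 * f * ν j + ν (j - 1) = 0) ∧
        ν 1 - 2 * g * ν 0 + ν (-1) = 0) ↔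
      ((f < -1 ∧ g = f + Real.sqrt (f ^ 2 - 1)) ∨
        (1 < f ∧ g = f - Real.sqrt (f ^ 2 - 1))) := by
  have hf2 : 1 < f ^ 2 := by nlinarith [sq_abs f, abs_nonneg f]
  set s : ℝ := Real.sqrt (f ^ 2 - 1) with hs
  have hs0 : 0 ≤ s := Real.sqrt_nonneg _
  have hs2 : s ^ 2 = f ^ 2 - 1 := Real.sq_sqrt (by linarith)
  rcases abs_cases f with ⟨hfe, _⟩ | ⟨hfe, _⟩
  · -- f > 1 case
    have hf1 : 1 < f := by rw [← hfe]; exact hf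
    have hroot : (f - s) ^ 2 - 2 * f * (f - s) + 1 = 0 := by nlinarith
    have hr1 : |f - s| < 1 := by
      rw [abs_lt]
      constructor
      · nlinarith
      · nlinarith
    constructor
    · intro hE
      exact Or.inr ⟨hf1, forward f g (f - s) hroot hr1 hE⟩
    · rintro (⟨h1, _⟩ | ⟨_, h2⟩)
      · linarith
      · exact construct f g (f - s) hroot hr1 h2
  · -- f < -1 case
    have hf1 : f < -1 := by nlinarith
    have hroot : (f + s) ^ 2 - 2 * f * (f + s) + 1 = 0 := by nlinarith
    have hr1 : |f + s| < 1 := by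
      rw [abs_lt]
      constructor
      · nlinarith
      · nlinarith
    constructor
    · intro hE
      exact Or.inl ⟨hf1, forward f g (f + s) hroot hr1 hE⟩
    · rintro (⟨_, h1⟩ | ⟨h2, _⟩)
      · exact construct f g (f + s) hroot hr1 h1
      · linarith
end

section
/- Let a,b>0, γ,γ̃∈ℝ, and k>0 with sin(ka)≠0 and sin(kb)≠0. For c∈ℝ and τ∈[−1,1] set f_c^τ(k) := c·sin(ka)/(2k) + sin(k(a+b))/sin(kb) − τ·sin(ka)/sin(kb), and set G(k) := (γ̃−γ)·sin(ka)/(2k). Then the following are equivalent: (i) there exists τ∈[−1,1] such that either (f_γ^τ(k) < −1 and f_{γ̃}^τ(k) = f_γ^τ(k) + √((f_γ^τ(k))²−1)) or (f_γ^τ(k) > 1 and f_{γ̃}^τ(k) = f_γ^τ(k) − √((f_γ^τ(k))²−1)); (ii) either (|sin(k(a+b))/sin(kb) + γ·sin(ka)/(2k) + √(G(k)²+1)| ≤ |sin(ka)/sin(kb)| and G(k) > 0), or (|sin(k(a+b))/sin(kb) + γ·sin(ka)/(2k) − √(G(k)²+1)| ≤ |sin(ka)/sin(kb)| and G(k) <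 0). -/
open Real Set

lemma key_stmt9 (A s G : ℝ) (hs : s ≠ 0) :
    (∃ τ ∈ Set.Icc (-1:ℝ) 1,
        (A - τ * s < -1 ∧ G = Real.sqrt ((A - τ * s) ^ 2 - 1)) ∨
        (1 < A - τ * s ∧ G = -Real.sqrt ((A - τ * s) ^ 2 - 1))) ↔
      ((|A + Real.sqrt (G ^ 2 + 1)| ≤ |s| ∧ 0 < G) ∨
       (|A - Real.sqrt (G ^ 2 + 1)| ≤ |s| ∧ G < 0)) := by
  have habs : ∀ τ : ℝ, τ ∈ Set.Icc (-1:ℝ) 1 → |τ * s| ≤ |s| := by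
    intro τ hτ
    rw [abs_mul]
    have hτ1 : |τ| ≤ 1 := abs_le.2 ⟨hτ.1, hτ.2⟩
    nlinarith [abs_nonneg s, abs_nonneg τ]
  constructor
  · rintro ⟨τ, hτ, ⟨hx, hGe⟩ | ⟨hx, hGe⟩⟩
    · set x := A - τ * s with hxdef
      have hx2 : (0:ℝ) < x ^ 2 - 1 := by nlinarith
      have hGpos : 0 < G := hGe ▸ Real.sqrt_pos.2 hx2
      have hG2 : G ^ 2 = x ^ 2 - 1 := by rw [hGe, Real.sq_sqrt hx2.le]
      have hsq : Real.sqrt (G ^ 2 + 1) = -x := by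
        rw [hG2, show x ^ 2 - 1 + 1 = x ^ 2 by ring, Real.sqrt_sq_eq_abs,
          abs_of_neg (by linarith)]
      left
      refine ⟨?_, hGpos⟩
      rw [hsq, show A + -x = τ * s by rw [hxdef]; ring]
      exact habs τ hτ
    · set x := A - τ * s with hxdef
      have hx2 : (0:ℝ) < x ^ 2 - 1 := by nlinarith
      have hGneg : G < 0 := by
        rw [hGe, neg_lt_zero]; exact Real.sqrt_pos.2 hx2
      have hG2 : G ^ 2 = x ^ 2 - 1 := by
        rw [hGe]; rw [neg_pow, Real.sq_sqrt hx2.le]; ring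
      have hsq : Real.sqrt (G ^ 2 + 1) = x := by
        rw [hG2, show x ^ 2 - 1 + 1 = x ^ 2 by ring, Real.sqrt_sq_eq_abs,
          abs_of_pos (by linarith)]
      right
      refine ⟨?_, hGneg⟩
      rw [hsq, show A - x = τ * s by rw [hxdef]; ring]
      exact habs τ hτ
  · have hs' : 0 < |s| := abs_pos.2 hs
    rintro (⟨h, hGpos⟩ | ⟨h, hGneg⟩)
    · refine ⟨(A + Real.sqrt (G ^ 2 + 1)) / s, ?_, Or.inl ⟨?_, ?_⟩⟩
      · have : |(A + Real.sqrt (G ^ 2 + 1)) / s| ≤ 1 := by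
          rw [abs_div, div_le_one hs']; exact h
        exact abs_le.1 this
      all_goals
        have hx : A - (A + Real.sqrt (G ^ 2 + 1)) / s * s = -Real.sqrt (G ^ 2 + 1) := by
          rw [div_mul_cancel₀ _ hs]; ring
        have hone : (1:ℝ) < Real.sqrt (G ^ 2 + 1) := by
          have := Real.sqrt_lt_sqrt (by norm_num : (0:ℝ) ≤ 1) (by nlinarith : (1:ℝ) < G ^ 2 + 1)
          simpa using this
      · rw [hx]; linarith
      · rw [hx]
        have h2 : (-Real.sqrt (G ^ 2 + 1)) ^ 2 - 1 = G ^ 2 := by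
          rw [neg_pow, Real.sq_sqrt (by positivity)]; ring
        rw [h2, Real.sqrt_sq hGpos.le]
    · refine ⟨(A - Real.sqrt (G ^ 2 + 1)) / s, ?_, Or.inr ⟨?_, ?_⟩⟩
      · have : |(A - Real.sqrt (G ^ 2 + 1)) / s| ≤ 1 := by
          rw [abs_div, div_le_one hs']; exact h
        exact abs_le.1 this
      all_goals
        have hx : A - (A - Real.sqrt (G ^ 2 + 1)) / s * s = Real.sqrt (G ^ 2 + 1) := by
          rw [div_mul_cancel₀ _ hs]; ring
        have hone : (1:ℝ) < Real.sqrt (G ^ 2 + 1) := by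
          have := Real.sqrt_lt_sqrt (by norm_num : (0:ℝ) ≤ 1) (by nlinarith : (1:ℝ) < G ^ 2 + 1)
          simpa using this
      · rw [hx]; linarith
      · rw [hx]
        have h2 : (Real.sqrt (G ^ 2 + 1)) ^ 2 - 1 = G ^ 2 := by
          rw [Real.sq_sqrt (by positivity)]; ring
        rw [h2, Real.sqrt_sq_eq_abs, abs_of_neg hGneg]; ring

theorem stmt_9 (a b γ γ' k : ℝ) (ha : 0 < a) (hb : 0 < b) (hk : 0 < k)
    (hsa : Real.sin (k * a) ≠ 0) (hsb : Real.sin (k * b) ≠ 0)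
    (f : ℝ → ℝ → ℝ)
    (hf : f = fun c τ => c * Real.sin (k * a) / (2 * k) +
        Real.sin (k * (a + b)) / Real.sin (k * b) - τ * Real.sin (k * a) / Real.sin (k * b))
    (G : ℝ) (hG : G = (γ' - γ) * Real.sin (k * a) / (2 * k)) :
    (∃ τ ∈ Set.Icc (-1 : ℝ) 1,
        (f γ τ < -1 ∧ f γ' τ = f γ τ + Real.sqrt ((f γ τ) ^ 2 - 1)) ∨
          (1 < f γ τ ∧ f γ' τ = f γ τ - Real.sqrt ((f γ τ) ^ 2 - 1))) ↔
      ((|Real.sin (k * (a + b)) / Real.sin (k * b) + γ * Real.sin (k * a) / (2 * k) +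
            Real.sqrt (G ^ 2 + 1)| ≤ |Real.sin (k * a) / Real.sin (k * b)| ∧ 0 < G) ∨
        (|Real.sin (k * (a + b)) / Real.sin (k * b) + γ * Real.sin (k * a) / (2 * k) -
            Real.sqrt (G ^ 2 + 1)| ≤ |Real.sin (k * a) / Real.sin (k * b)| ∧ G < 0)) := by
  set sa := Real.sin (k * a)
  set sb := Real.sin (k * b)
  set A := Real.sin (k * (a + b)) / sb + γ * sa / (2 * k) with hA
  set s := sa / sb with hsdef
  have hs : s ≠ 0 := div_ne_zero hsa hsb
  have hfγ : ∀ τ : ℝ, f γ τ = A - τ * s := by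
    intro τ; rw [hf]; simp only [hA, hsdef]; ring
  have hfγ' : ∀ τ : ℝ, f γ' τ = f γ τ + G := by
    intro τ; rw [hf, hG]; simp only; ring
  have := key_stmt9 A s G hs
  rw [← this]
  apply exists_congr
  intro τ
  rw [hfγ, hfγ', hfγ]
  constructor
  · rintro ⟨hτ, h | h⟩
    · exact ⟨hτ, Or.inl ⟨h.1, by linarith [h.2]⟩⟩
    · exact ⟨hτ, Or.inr ⟨h.1, by linarith [h.2]⟩⟩
  · rintro ⟨hτ, h | h⟩
    · exact ⟨hτ, Or.inl ⟨h.1, by linarith [h.2]⟩⟩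
    · exact ⟨hτ, Or.inr ⟨h.1, by linarith [h.2]⟩⟩
end

section
/- Let a,b>0, γ,γ̃∈ℝ, and κ>0. For c∈ℝ and τ∈[−1,1] set f̂_c^τ(κ) := c·sinh(κa)/(2κ) + sinh(κ(a+b))/sinh(κb) − τ·sinh(κa)/sinh(κb), and set Ĝ(κ) := (γ̃−γ)·sinh(κa)/(2κ). Then the following are equivalent: (i) there exists τ∈[−1,1] such that either (f̂_γ^τ(κ) < −1 and f̂_{γ̃}^τ(κ) = f̂_γ^τ(κ) + √((f̂_γ^τ(κ))²−1)) or (f̂_γ^τ(κ) > 1 and f̂_{γ̃}^τ(κ) = f̂_γ^τ(κ) − √((f̂_γ^τ(κ))²−1)); (ii) either (|sinh(κ(a+b))/sinh(κb) + γ·sinh(κa)/(2κ) + √(Ĝ(κ)²+1)| ≤ sinh(κa)/sinh(κb) and Ĝ(κ) > 0), or (|sinh(κ(a+b))/sinh(κb) + γ·sinh(κa)/(2κ) − √(Ĝ(κ)²+1)| ≤ sinh(κa)/sinh(κb) and Ĝ(κ) < 0). -/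
open Real Set

theorem stmt_10 (a b γ γ' κ : ℝ) (ha : 0 < a) (hb : 0 < b) (hκ : 0 < κ)
    (f : ℝ → ℝ → ℝ)
    (hf : f = fun c τ => c * Real.sinh (κ * a) / (2 * κ) +
        Real.sinh (κ * (a + b)) / Real.sinh (κ * b) - τ * Real.sinh (κ * a) / Real.sinh (κ * b))
    (G : ℝ) (hG : G = (γ' - γ) * Real.sinh (κ * a) / (2 * κ)) :
    (∃ τ ∈ Set.Icc (-1 : ℝ) 1,
        (f γ τ < -1 ∧ f γ' τ = f γ τ + Real.sqrt ((f γ τ) ^ 2 - 1)) ∨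
          (1 < f γ τ ∧ f γ' τ = f γ τ - Real.sqrt ((f γ τ) ^ 2 - 1))) ↔
      ((|Real.sinh (κ * (a + b)) / Real.sinh (κ * b) + γ * Real.sinh (κ * a) / (2 * κ) +
            Real.sqrt (G ^ 2 + 1)| ≤ Real.sinh (κ * a) / Real.sinh (κ * b) ∧ 0 < G) ∨
        (|Real.sinh (κ * (a + b)) / Real.sinh (κ * b) + γ * Real.sinh (κ * a) / (2 * κ) -
            Real.sqrt (G ^ 2 + 1)| ≤ Real.sinh (κ * a) / Real.sinh (κ * b) ∧ G < 0)) := by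
  have hs1 : 0 < Real.sinh (κ * a) := Real.sinh_pos_iff.mpr (by positivity)
  have hs2 : 0 < Real.sinh (κ * b) := Real.sinh_pos_iff.mpr (by positivity)
  set s1 := Real.sinh (κ * a) with hs1d
  set s2 := Real.sinh (κ * b) with hs2d
  set S := Real.sinh (κ * (a + b)) with hSd
  set A := S / s2 + γ * s1 / (2 * κ) with hAd
  set s := s1 / s2 with hsd
  have hspos : 0 < s := div_pos hs1 hs2
  have hf1 : ∀ τ : ℝ, f γ τ = A - τ * s := by
    intro τ; rw [hf]; simp only [hAd, hsd]; ring
  have hf2 : ∀ τ : ℝ, f γ' τ = f γ τ + G := by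
    intro τ; rw [hf]; simp only [hG]; ring
  have hsqrtG : 1 < Real.sqrt (G ^ 2 + 1) ∨ G = 0 := by
    rcases eq_or_ne G 0 with h | h
    · right; exact h
    · left
      have : (1 : ℝ) < G ^ 2 + 1 := by nlinarith [sq_pos_of_ne_zero h]
      calc (1:ℝ) = Real.sqrt 1 := by simp
        _ < Real.sqrt (G ^ 2 + 1) := Real.sqrt_lt_sqrt (by norm_num) this
  constructor
  · rintro ⟨τ, hτ, h⟩
    rw [Set.mem_Icc] at hτ
    have habs : |τ * s| ≤ s := by
      rw [abs_mul, abs_of_pos hspos]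
      have h1 : |τ| ≤ 1 := abs_le.mpr hτ
      nlinarith [abs_nonneg τ]
    rcases h with ⟨hlt, heq⟩ | ⟨hlt, heq⟩
    · -- F < -1, G = √(F²-1)
      have hGeq : G = Real.sqrt ((f γ τ) ^ 2 - 1) := by
        have h2 := hf2 τ; linarith [heq]
      have hF2 : 1 < (f γ τ) ^ 2 := by nlinarith
      have hGpos : 0 < G := by
        rw [hGeq]; exact Real.sqrt_pos.mpr (by linarith)
      have hGsq : G ^ 2 = (f γ τ) ^ 2 - 1 := by
        rw [hGeq, Real.sq_sqrt (by linarith)]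
      have hFval : f γ τ = -Real.sqrt (G ^ 2 + 1) := by
        have h1 : Real.sqrt (G ^ 2 + 1) = Real.sqrt ((f γ τ) ^ 2) := by
          rw [hGsq]; ring_nf
        rw [h1, Real.sqrt_sq_eq_abs, abs_of_neg (by linarith : f γ τ < 0)]; ring
      left
      refine ⟨?_, hGpos⟩
      have hkey : A + Real.sqrt (G ^ 2 + 1) = τ * s := by
        have h3 := hf1 τ; rw [hFval] at h3; linarith
      rw [hkey]; exact habs
    · -- F > 1, G = -√(F²-1)
      have hGeq : G = -Real.sqrt ((f γ τ) ^ 2 - 1) := by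
        have h2 := hf2 τ; linarith [heq]
      have hF2 : 1 < (f γ τ) ^ 2 := by nlinarith
      have hGneg : G < 0 := by
        rw [hGeq, neg_lt_zero]; exact Real.sqrt_pos.mpr (by linarith)
      have hGsq : G ^ 2 = (f γ τ) ^ 2 - 1 := by
        rw [hGeq, neg_pow, Real.sq_sqrt (by linarith)]; ring
      have hFval : f γ τ = Real.sqrt (G ^ 2 + 1) := by
        have h1 : Real.sqrt (G ^ 2 + 1) = Real.sqrt ((f γ τ) ^ 2) := by
          rw [hGsq]; ring_nf
        rw [h1, Real.sqrt_sq_eq_abs, abs_of_pos (by linarith : 0 < f γ τ)]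
      right
      refine ⟨?_, hGneg⟩
      have hkey : A - Real.sqrt (G ^ 2 + 1) = τ * s := by
        have h3 := hf1 τ; rw [hFval] at h3; linarith
      rw [hkey]; exact habs
  · rintro (⟨habs, hGpos⟩ | ⟨habs, hGneg⟩)
    · have hsq1 : 1 < Real.sqrt (G ^ 2 + 1) := by
        rcases hsqrtG with h | h
        · exact h
        · exact absurd h (ne_of_gt hGpos)
      refine ⟨(A + Real.sqrt (G ^ 2 + 1)) / s, ?_, ?_⟩
      · rw [Set.mem_Icc]
        have h1 := abs_le.mp habs
        constructor
        · rw [le_div_iff₀ hspos]; linarith [h1.1]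
        · rw [div_le_one hspos]; exact h1.2
      · have hFval : f γ ((A + Real.sqrt (G ^ 2 + 1)) / s) = -Real.sqrt (G ^ 2 + 1) := by
          rw [hf1, div_mul_cancel₀ _ (ne_of_gt hspos)]; ring
        left
        refine ⟨by rw [hFval]; linarith, ?_⟩
        rw [hf2, hFval]
        congr 1
        have hnn : (0:ℝ) ≤ G ^ 2 + 1 := by positivity
        rw [neg_pow, Real.sq_sqrt hnn]
        have : (-1 : ℝ) ^ 2 * (G ^ 2 + 1) - 1 = G ^ 2 := by ring
        rw [this, Real.sqrt_sq (le_of_lt hGpos)]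
    · have hsq1 : 1 < Real.sqrt (G ^ 2 + 1) := by
        rcases hsqrtG with h | h
        · exact h
        · exact absurd h (ne_of_lt hGneg)
      refine ⟨(A - Real.sqrt (G ^ 2 + 1)) / s, ?_, ?_⟩
      · rw [Set.mem_Icc]
        have h1 := abs_le.mp habs
        constructor
        · rw [le_div_iff₀ hspos]; linarith [h1.1]
        · rw [div_le_one hspos]; exact h1.2
      · have hFval : f γ ((A - Real.sqrt (G ^ 2 + 1)) / s) = Real.sqrt (G ^ 2 + 1) := by
          rw [hf1, div_mul_cancel₀ _ (ne_of_gt hspos)]; ring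
        right
        refine ⟨by rw [hFval]; linarith, ?_⟩
        rw [hf2, hFval]
        have hnn : (0:ℝ) ≤ G ^ 2 + 1 := by positivity
        rw [Real.sq_sqrt hnn]
        have h2 : G ^ 2 + 1 - 1 = G ^ 2 := by ring
        rw [h2, Real.sqrt_sq_eq_abs, abs_of_neg hGneg]
        ring
end

section
/- Let a,b>0 and γ,γ̃∈ℝ with either γ̃>γ>0 or γ̃<γ<0, and set G(k) := (γ̃−γ)·sin(ka)/(2k). Then there is no k>0 with sin(ka)≠0 and sin(kb)≠0 satisfying simultaneously the gap condition |γ·sin(ka)/(2k) + sin(k(a+b))/sin(kb)| > 1 + |sin(ka)/sin(kb)| and the perturbed positive band condition, i.e. either (|sin(k(a+b))/sin(kb) + γ·sin(ka)/(2k) + √(G(k)²+1)| ≤ |sin(ka)/sin(kb)| and G(k) > 0) or (|sin(k(a+b))/sin(kb) + γ·sin(ka)/(2k) − √(G(k)²+1)| ≤ |sin(ka)/sin(kb)| and G(k) < 0). -/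
open Real Set

theorem stmt_11 (a b γ γ' : ℝ) (ha : 0 < a) (hb : 0 < b)
    (hγ : (γ < γ' ∧ 0 < γ) ∨ (γ' < γ ∧ γ < 0))
    (G : ℝ → ℝ) (hG : G = fun k => (γ' - γ) * Real.sin (k * a) / (2 * k)) :
    ¬ ∃ k : ℝ, 0 < k ∧ Real.sin (k * a) ≠ 0 ∧ Real.sin (k * b) ≠ 0 ∧
      (1 + |Real.sin (k * a) / Real.sin (k * b)| <
        |γ * Real.sin (k * a) / (2 * k) + Real.sin (k * (a + b)) / Real.sin (k * b)|) ∧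
      ((|Real.sin (k * (a + b)) / Real.sin (k * b) + γ * Real.sin (k * a) / (2 * k) +
            Real.sqrt ((G k) ^ 2 + 1)| ≤ |Real.sin (k * a) / Real.sin (k * b)| ∧ 0 < G k) ∨
        (|Real.sin (k * (a + b)) / Real.sin (k * b) + γ * Real.sin (k * a) / (2 * k) -
            Real.sqrt ((G k) ^ 2 + 1)| ≤ |Real.sin (k * a) / Real.sin (k * b)| ∧ G k < 0)) := by
  rintro ⟨k, hk, hsa, hsb, hgap, hband⟩
  simp only [hG] at hband
  set u : ℝ := γ * Real.sin (k * a) / (2 * k) with hu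
  set v : ℝ := (γ' - γ) * Real.sin (k * a) / (2 * k) with hv
  set c : ℝ := Real.sin (k * (a + b)) / Real.sin (k * b) with hc
  set s : ℝ := |Real.sin (k * a) / Real.sin (k * b)| with hs
  set r : ℝ := Real.sqrt (v ^ 2 + 1) with hr
  have hs0 : 0 ≤ s := abs_nonneg _
  have hr1 : 1 ≤ r := by
    rw [hr]
    have : (1 : ℝ) = Real.sqrt 1 := (Real.sqrt_one).symm
    rw [this]
    exact Real.sqrt_le_sqrt (by nlinarith [sq_nonneg v])
  -- bound on c
  have hceq : c = (Real.sin (k * a) / Real.sin (k * b)) * Real.cos (k * b) + Real.cos (k * a) := by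
    rw [hc, mul_add, Real.sin_add]
    field_simp
  have hcb : |c| ≤ 1 + s := by
    rw [hceq]
    calc |(Real.sin (k * a) / Real.sin (k * b)) * Real.cos (k * b) + Real.cos (k * a)|
        ≤ |(Real.sin (k * a) / Real.sin (k * b)) * Real.cos (k * b)| + |Real.cos (k * a)| :=
          abs_add_le _ _
      _ ≤ s * 1 + 1 := by
          rw [abs_mul]
          gcongr
          · exact abs_cos_le_one _
          · exact abs_cos_le_one _
      _ = 1 + s := by ring
  have hcb1 : -(1 + s) ≤ c := (abs_le.mp hcb).1
  have hcb2 : c ≤ 1 + s := (abs_le.mp hcb).2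
  -- u and v have the same sign
  have hK : 0 < γ * (γ' - γ) := by
    rcases hγ with ⟨h1, h2⟩ | ⟨h1, h2⟩ <;> nlinarith
  have hd2 : 0 < (Real.sin (k * a) / (2 * k)) ^ 2 := by
    have hd : Real.sin (k * a) / (2 * k) ≠ 0 := by
      apply div_ne_zero hsa
      positivity
    rcases hd.lt_or_gt with h | h <;> nlinarith
  have huv : 0 < u * v := by
    have : u * v = γ * (γ' - γ) * (Real.sin (k * a) / (2 * k)) ^ 2 := by
      rw [hu, hv]; ring
    rw [this]
    exact mul_pos hK hd2
  rcases hband with ⟨hb1, hb2⟩ | ⟨hb1, hb2⟩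
  · -- v > 0, so u > 0
    have hupos : 0 < u := by nlinarith
    have hb1' := (abs_le.mp hb1).2
    rcases (lt_abs.mp hgap) with h | h
    · linarith
    · linarith
  · -- v < 0, so u < 0
    have huneg : u < 0 := by nlinarith
    have hb1' := (abs_le.mp hb1).1
    rcases (lt_abs.mp hgap) with h | h
    · linarith
    · linarith
end

section
/- Let a,b>0, γ,γ̃∈ℝ, κ>0, and set Ĝ(κ) := (γ̃−γ)·sinh(κa)/(2κ). Suppose κ satisfies the gap condition γ·sinh(κa)/(2κ) + sinh(κ(a+b))/sinh(κb) < −1 − sinh(κa)/sinh(κb) together with the perturbed negative band condition, i.e. either (|sinh(κ(a+b))/sinh(κb) + γ·sinh(κa)/(2κ) + √(Ĝ(κ)²+1)| ≤ sinh(κa)/sinh(κb) and Ĝ(κ) > 0) or (|sinh(κ(a+b))/sinh(κb) + γ·sinh(κa)/(2κ) − √(Ĝ(κ)²+1)| ≤ sinh(κa)/sinh(κb) and Ĝ(κ) < 0). Then γ < 0 and γ̃ > γ. -/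
open Real Set

theorem stmt_12 (a b γ γ' κ : ℝ) (ha : 0 < a) (hb : 0 < b) (hκ : 0 < κ)
    (G : ℝ) (hG : G = (γ' - γ) * Real.sinh (κ * a) / (2 * κ))
    (hgap : γ * Real.sinh (κ * a) / (2 * κ) + Real.sinh (κ * (a + b)) / Real.sinh (κ * b) <
      -1 - Real.sinh (κ * a) / Real.sinh (κ * b))
    (hband : (|Real.sinh (κ * (a + b)) / Real.sinh (κ * b) + γ * Real.sinh (κ * a) / (2 * κ) +
          Real.sqrt (G ^ 2 + 1)| ≤ Real.sinh (κ * a) / Real.sinh (κ * b) ∧ 0 < G) ∨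
      (|Real.sinh (κ * (a + b)) / Real.sinh (κ * b) + γ * Real.sinh (κ * a) / (2 * κ) -
          Real.sqrt (G ^ 2 + 1)| ≤ Real.sinh (κ * a) / Real.sinh (κ * b) ∧ G < 0)) :
    γ < 0 ∧ γ < γ' := by
  have hsa : 0 < Real.sinh (κ * a) := Real.sinh_pos_iff.2 (by positivity)
  have hsb : 0 < Real.sinh (κ * b) := Real.sinh_pos_iff.2 (by positivity)
  have hsab : 0 < Real.sinh (κ * (a + b)) := Real.sinh_pos_iff.2 (by positivity)
  have hS : 0 < Real.sinh (κ * (a + b)) / Real.sinh (κ * b) := by positivity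
  have hsasb : 0 < Real.sinh (κ * a) / Real.sinh (κ * b) := by positivity
  have hT : γ * Real.sinh (κ * a) / (2 * κ) < 0 := by linarith
  have hγ : γ < 0 := by
    by_contra h
    push_neg at h
    have : 0 ≤ γ * Real.sinh (κ * a) / (2 * κ) := by positivity
    linarith
  refine ⟨hγ, ?_⟩
  have hsqrt : 1 ≤ Real.sqrt (G ^ 2 + 1) := by
    nlinarith [Real.sq_sqrt (show (0:ℝ) ≤ G ^ 2 + 1 by positivity),
      Real.sqrt_nonneg (G ^ 2 + 1), sq_nonneg G]
  rcases hband with ⟨_, hGpos⟩ | ⟨habs, hGneg⟩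
  · rw [hG] at hGpos
    have h2κ : (0:ℝ) < 2 * κ := by linarith
    have h1 : 0 < (γ' - γ) * Real.sinh (κ * a) := by
      have := mul_pos hGpos h2κ
      rwa [div_mul_cancel₀ _ h2κ.ne'] at this
    rcases mul_pos_iff.mp h1 with ⟨h2, _⟩ | ⟨_, h3⟩
    · linarith
    · linarith
  · have := (abs_le.mp habs).1
    linarith
end

section
/- Let a,b>0, let n be a positive integer, set k_n := nπ/a, and assume sin(k_n·b) ≠ 0. Let γ equal either 2k_n·tan(k_n·b/2) or −2k_n·cot(k_n·b/2). Then there exists δ>0 such that every k>0 with |k−k_n|<δ and sin(kb)≠0 satisfies |γ·sin(ka)/(2k) + sin(k(a+b))/sin(kb)| ≤ 1 + |sin(ka)/sin(kb)|; in other words, k_n is an interior point of the set of momenta satisfying the positive band condition for the coupling γ. -/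
open Real Set

section QGHelpers

open Filter

private lemma absAdd_max' {A B C : ℝ} (hAB : A * B ≤ 0) (hA : |A| ≤ C) (hB : |B| ≤ C) :
    |A + B| ≤ C := by
  rcases mul_nonpos_iff.mp hAB with ⟨h1, h2⟩ | ⟨h1, h2⟩ <;>
    (rw [abs_le] at hA hB ⊢; constructor <;> linarith [hA.1, hA.2, hB.1, hB.2])

private lemma qg_lemA {U v q m : ℝ} (hq : |q| ≤ 1) (hU : |U| ≤ |v|) (hm : |m| ≤ 1)
    (hs : 0 ≤ U * q * v → m ≤ 0) : |U * (1 + m) + q * v| ≤ |U| + |v| := by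
  have hqv : |q * v| ≤ |v| := by rw [abs_mul]; nlinarith [abs_nonneg v]
  rcases le_or_gt 0 (U * q * v) with h | h
  · have hm' := hs h
    have h1 : |U * (1 + m)| ≤ |U| := by
      rw [abs_mul]
      have h2 : |1 + m| ≤ 1 := by rw [abs_le] at hm ⊢; constructor <;> linarith [hm.1, hm.2]
      nlinarith [abs_nonneg U]
    calc |U * (1 + m) + q * v| ≤ |U * (1 + m)| + |q * v| := abs_add_le _ _
      _ ≤ |U| + |v| := by linarith
  · have h2 : |U + q * v| ≤ |v| := by
      refine absAdd_max' ?_ hU hqv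
      nlinarith
    have h3 : |U * m| ≤ |U| := by rw [abs_mul]; nlinarith [abs_nonneg U]
    calc |U * (1 + m) + q * v| = |(U + q * v) + U * m| := by congr 1; ring
      _ ≤ |U + q * v| + |U * m| := abs_add_le _ _
      _ ≤ |U| + |v| := by linarith

private lemma qg_lemB {f f' : ℝ → ℝ} {kn : ℝ} (hf0 : f kn = 0)
    (hder : ∀ᶠ k in nhds kn, HasDerivAt f (f' k) k)
    (hcont : ContinuousAt f' kn) (hneg : f' kn < 0) :
    ∀ᶠ k in nhds kn, (k - kn) * f k ≤ 0 := by
  have h1 : ∀ᶠ k in nhds kn, f' k < 0 := hcont.eventually_lt_const hneg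
  obtain ⟨ε, hε, hP⟩ := Metric.eventually_nhds_iff.mp (h1.and hder)
  have hmem : ∀ y : ℝ, y ∈ Ioo (kn - ε) (kn + ε) → dist y kn < ε := by
    intro y hy
    rw [Real.dist_eq, abs_lt]
    exact ⟨by linarith [hy.1], by linarith [hy.2]⟩
  have hanti : StrictAntiOn f (Ioo (kn - ε) (kn + ε)) := by
    apply strictAntiOn_of_deriv_neg (convex_Ioo _ _)
    · intro y hy
      exact ((hP (hmem y hy)).2).continuousAt.continuousWithinAt
    · intro y hy
      rw [interior_Ioo] at hy
      rw [(hP (hmem y hy)).2.deriv]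
      exact (hP (hmem y hy)).1
  rw [Metric.eventually_nhds_iff]
  refine ⟨ε, hε, fun {y} hy => ?_⟩
  rw [Real.dist_eq, abs_lt] at hy
  have hyI : y ∈ Ioo (kn - ε) (kn + ε) := ⟨by linarith [hy.1], by linarith [hy.2]⟩
  have hknI : kn ∈ Ioo (kn - ε) (kn + ε) := ⟨by linarith, by linarith⟩
  rcases lt_trichotomy y kn with h | h | h
  · have := hanti hyI hknI h
    rw [hf0] at this
    nlinarith
  · subst h; simp [hf0]
  · have := hanti hknI hyI h
    rw [hf0] at this
    nlinarith

private lemma qg_sin_add_self_pos {y : ℝ} (hy : 0 < y) : 0 < Real.sin y + y := by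
  rcases le_or_gt 0 (Real.sin y) with h | h
  · linarith
  · have hπ : π < y := by
      by_contra hle
      exact absurd (Real.sin_nonneg_of_nonneg_of_le_pi hy.le (not_lt.mp hle)) (by linarith)
    nlinarith [Real.neg_one_le_sin y, Real.pi_gt_three]

private lemma qg_core (a b kn γ σ : ℝ) (n : ℕ) (f : ℝ → ℝ)
    (ha : 0 < a) (hkn : 0 < kn) (hna : kn * a = n * π)
    (hv0 : Real.sin (kn * b) ≠ 0) (hσ : σ * σ = 1)
    (hf0 : f kn = 0)
    (H1 : ∀ᶠ k in nhds kn,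
      γ * Real.sin (k * b) / (2 * k) + Real.cos (k * b) = σ * (1 + Real.sin (k * b) * f k))
    (H2 : ∀ᶠ k in nhds kn, σ * ((k - kn) * f k) ≤ 0)
    (H3 : ∀ᶠ k in nhds kn, |Real.sin (k * b) * f k| ≤ 1) :
    ∃ δ > 0, ∀ k : ℝ, 0 < k → |k - kn| < δ → Real.sin (k * b) ≠ 0 →
      |γ * Real.sin (k * a) / (2 * k) + Real.sin (k * (a + b)) / Real.sin (k * b)| ≤
        1 + |Real.sin (k * a) / Real.sin (k * b)| := by
  have hπ := Real.pi_pos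
  have hσabs : |σ| = 1 := by
    rcases mul_self_eq_one_iff.mp hσ with h | h <;> rw [h] <;> norm_num
  set V0 : ℝ := |Real.sin (kn * b)| with hV0
  have hV0pos : 0 < V0 := abs_pos.mpr hv0
  have ev_v : ∀ᶠ k in nhds kn, V0 / 2 < |Real.sin (k * b)| := by
    have hc : ContinuousAt (fun k : ℝ => |Real.sin (k * b)|) kn := by fun_prop
    exact hc.eventually_const_lt (by linarith)
  have ev_close : ∀ᶠ k in nhds kn, |k - kn| < min (V0 / (2 * a)) (π / (2 * a)) := by
    rw [Metric.eventually_nhds_iff]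
    exact ⟨min (V0 / (2 * a)) (π / (2 * a)), by positivity,
      fun {y} hy => by rwa [Real.dist_eq] at hy⟩
  obtain ⟨δ, hδ, HP⟩ := Metric.eventually_nhds_iff.mp
    ((((H1.and H2).and H3).and (ev_v.and ev_close)))
  refine ⟨δ, hδ, fun k hk0 hkδ hvk => ?_⟩
  obtain ⟨⟨⟨P1, P2⟩, P3⟩, P4, P5⟩ := HP (show dist k kn < δ by rwa [Real.dist_eq])
  set u : ℝ := Real.sin (k * a) with hu_def
  set q : ℝ := Real.cos (k * a) with hq_def
  set v : ℝ := Real.sin (k * b) with hv_def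
  set m : ℝ := v * f k with hm_def
  set x : ℝ := (k - kn) * a with hx_def
  have hka : k * a = x + n * π := by rw [← hna]; ring
  have hu : u = (-1) ^ n * Real.sin x := by rw [hu_def, hka, Real.sin_add_nat_mul_pi]
  have hq : q = (-1) ^ n * Real.cos x := by rw [hq_def, hka, Real.cos_add_nat_mul_pi]
  have hx_small : |x| < π / 2 := by
    rw [hx_def, abs_mul, abs_of_pos ha]
    calc |k - kn| * a < min (V0 / (2 * a)) (π / (2 * a)) * a :=
          mul_lt_mul_of_pos_right P5 ha
      _ ≤ π / (2 * a) * a := mul_le_mul_of_nonneg_right (min_le_right _ _) ha.le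
      _ = π / 2 := by field_simp
  have hx_V : |x| ≤ V0 / 2 := by
    rw [hx_def, abs_mul, abs_of_pos ha]
    calc |k - kn| * a ≤ min (V0 / (2 * a)) (π / (2 * a)) * a :=
          mul_le_mul_of_nonneg_right P5.le ha.le
      _ ≤ V0 / (2 * a) * a := mul_le_mul_of_nonneg_right (min_le_left _ _) ha.le
      _ = V0 / 2 := by field_simp
  have habs_u : |u| = |Real.sin x| := by
    rw [hu, abs_mul, abs_pow, abs_neg, abs_one, one_pow, one_mul]
  have huv : |u| ≤ |v| := by
    rw [habs_u]
    calc |Real.sin x| ≤ |x| := Real.abs_sin_le_abs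
      _ ≤ V0 / 2 := hx_V
      _ ≤ |v| := P4.le
  have hq1 : |q| ≤ 1 := Real.abs_cos_le_one _
  have hm1 : |m| ≤ 1 := P3
  have hUabs : |σ * u| = |u| := by rw [abs_mul, hσabs, one_mul]
  have hx1 : -(π / 2) < x := by rw [abs_lt] at hx_small; exact hx_small.1
  have hx2 : x < π / 2 := by rw [abs_lt] at hx_small; exact hx_small.2
  have hsgn : 0 ≤ (σ * u) * q * v → m ≤ 0 := by
    intro h0
    have huq : u * q = Real.sin x * Real.cos x := by
      rw [hu, hq, mul_mul_mul_comm, ← mul_pow]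
      norm_num
    have hcosx : 0 < Real.cos x := Real.cos_pos_of_mem_Ioo ⟨hx1, hx2⟩
    have hmeq : m = (σ * v) * (σ * f k) := by
      rw [hm_def]
      linear_combination (-(v * f k)) * hσ
    have hP2' : (k - kn) * (σ * f k) ≤ 0 := by
      calc (k - kn) * (σ * f k) = σ * ((k - kn) * f k) := by ring
        _ ≤ 0 := P2
    have h0' : 0 ≤ (σ * v) * (u * q) := by
      calc (0:ℝ) ≤ (σ * u) * q * v := h0
        _ = (σ * v) * (u * q) := by ring
    rcases lt_trichotomy k kn with hlt | heq | hgt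
    · have hxneg : x < 0 := by rw [hx_def]; exact mul_neg_of_neg_of_pos (by linarith) ha
      have hsinx : Real.sin x < 0 :=
        Real.sin_neg_of_neg_of_neg_pi_lt hxneg (by linarith)
      have huqneg : u * q < 0 := by rw [huq]; exact mul_neg_of_neg_of_pos hsinx hcosx
      have hσv : σ * v ≤ 0 := by
        by_contra h'
        push_neg at h'
        exact absurd h0' (not_le.mpr (mul_neg_of_pos_of_neg h' huqneg))
      have hσf : 0 ≤ σ * f k := by
        by_contra h'
        push_neg at h'
        exact absurd hP2' (not_le.mpr (mul_pos_of_neg_of_neg (by linarith) h'))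
      rw [hmeq]
      exact mul_nonpos_of_nonpos_of_nonneg hσv hσf
    · subst heq; rw [hm_def, hf0]; simp
    · have hxpos : 0 < x := by rw [hx_def]; exact mul_pos (by linarith) ha
      have hsinx : 0 < Real.sin x :=
        Real.sin_pos_of_pos_of_lt_pi hxpos (by linarith)
      have huqpos : 0 < u * q := by rw [huq]; exact mul_pos hsinx hcosx
      have hσv : 0 ≤ σ * v := by
        by_contra h'
        push_neg at h'
        exact absurd h0' (not_le.mpr (mul_neg_of_neg_of_pos h' huqpos))
      have hσf : σ * f k ≤ 0 := by
        by_contra h'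
        push_neg at h'
        exact absurd hP2' (not_le.mpr (mul_pos (by linarith) h'))
      rw [hmeq]
      exact mul_nonpos_of_nonneg_of_nonpos hσv hσf
  have main := qg_lemA hq1 (by rw [hUabs]; exact huv) hm1 hsgn
  have hk2 : (2 : ℝ) * k ≠ 0 := by positivity
  have KEY : γ * Real.sin (k * a) / (2 * k) + Real.sin (k * (a + b)) / Real.sin (k * b)
      = ((σ * u) * (1 + m) + q * v) / v := by
    have hw : Real.sin (k * (a + b)) = u * Real.cos (k * b) + q * v := by
      rw [show k * (a + b) = k * a + k * b by ring, Real.sin_add]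
    rw [hw, ← hu_def, ← hv_def]
    have e2 : γ * u / (2 * k) + (u * Real.cos (k * b) + q * v) / v
        = (u * (γ * v / (2 * k) + Real.cos (k * b)) + q * v) / v := by
      field_simp
      ring
    rw [e2, P1]
    congr 1
    ring
  rw [KEY]
  have hv_abs : (0 : ℝ) < |v| := abs_pos.mpr hvk
  rw [abs_div, div_le_iff₀ hv_abs, abs_div]
  have expand : (1 + |u| / |v|) * |v| = |v| + |u| := by field_simp
  rw [expand]
  rw [hUabs] at main
  linarith

private lemma qg_id1 (b kn k T : ℝ) (hk0 : k ≠ 0) (hck : Real.cos (k * (b/2)) ≠ 0) :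
    (2 * kn * T) * Real.sin (k * b) / (2 * k) + Real.cos (k * b) =
      1 * (1 + Real.sin (k * b) *
        (kn * T * k⁻¹ - Real.sin (k * (b/2)) / Real.cos (k * (b/2)))) := by
  rw [show k * b = 2 * (k * (b/2)) by ring, Real.sin_two_mul, Real.cos_two_mul]
  have hpy := Real.sin_sq_add_cos_sq (k * (b/2))
  set S := Real.sin (k * (b/2)) with hS
  set C := Real.cos (k * (b/2)) with hC
  field_simp
  linear_combination (2 * k) * hpy

private lemma qg_id2 (b kn k C0 : ℝ) (hk0 : k ≠ 0) (hsk : Real.sin (k * (b/2)) ≠ 0) :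
    (-(2 * kn * C0)) * Real.sin (k * b) / (2 * k) + Real.cos (k * b) =
      (-1) * (1 + Real.sin (k * b) *
        (kn * C0 * k⁻¹ - Real.cos (k * (b/2)) / Real.sin (k * (b/2)))) := by
  rw [show k * b = 2 * (k * (b/2)) by ring, Real.sin_two_mul, Real.cos_two_mul]
  have hpy := Real.sin_sq_add_cos_sq (k * (b/2))
  set S := Real.sin (k * (b/2)) with hS
  set C := Real.cos (k * (b/2)) with hC
  field_simp
  ring

private lemma qg_d1 (b kn T k : ℝ) (hk0 : k ≠ 0) (hck : Real.cos (k * (b/2)) ≠ 0) :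
    HasDerivAt (fun k => kn * T * k⁻¹ - Real.sin (k * (b/2)) / Real.cos (k * (b/2)))
      (kn * T * (-(k^2)⁻¹) - (b/2) / Real.cos (k * (b/2))^2) k := by
  have h1 : HasDerivAt (fun y : ℝ => kn * T * y⁻¹) (kn * T * (-(k^2)⁻¹)) k :=
    (hasDerivAt_inv hk0).const_mul (kn * T)
  have hlin : HasDerivAt (fun y : ℝ => y * (b/2)) (b/2) k := hasDerivAt_mul_const (b/2)
  have hS : HasDerivAt (fun y : ℝ => Real.sin (y * (b/2))) (Real.cos (k * (b/2)) * (b/2)) k :=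
    hlin.sin
  have hC : HasDerivAt (fun y : ℝ => Real.cos (y * (b/2))) (-Real.sin (k * (b/2)) * (b/2)) k :=
    hlin.cos
  have hdiv := hS.div hC hck
  have htot := h1.sub hdiv
  refine htot.congr_deriv (Eq.symm ?_)
  have hpy := Real.sin_sq_add_cos_sq (k * (b/2))
  set S := Real.sin (k * (b/2)) with hSd
  set C := Real.cos (k * (b/2)) with hCd
  field_simp
  linear_combination (b * k^2) * hpy

private lemma qg_d2 (b kn C0 k : ℝ) (hk0 : k ≠ 0) (hsk : Real.sin (k * (b/2)) ≠ 0) :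
    HasDerivAt (fun k => -(kn * C0 * k⁻¹ - Real.cos (k * (b/2)) / Real.sin (k * (b/2))))
      (-(kn * C0 * (-(k^2)⁻¹) + (b/2) / Real.sin (k * (b/2))^2)) k := by
  have h1 : HasDerivAt (fun y : ℝ => kn * C0 * y⁻¹) (kn * C0 * (-(k^2)⁻¹)) k :=
    (hasDerivAt_inv hk0).const_mul (kn * C0)
  have hlin : HasDerivAt (fun y : ℝ => y * (b/2)) (b/2) k := hasDerivAt_mul_const (b/2)
  have hS : HasDerivAt (fun y : ℝ => Real.sin (y * (b/2))) (Real.cos (k * (b/2)) * (b/2)) k :=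
    hlin.sin
  have hC : HasDerivAt (fun y : ℝ => Real.cos (y * (b/2))) (-Real.sin (k * (b/2)) * (b/2)) k :=
    hlin.cos
  have hdiv := hC.div hS hsk
  have htot := (h1.sub hdiv).neg
  refine htot.congr_deriv (Eq.symm ?_)
  have hpy := Real.sin_sq_add_cos_sq (k * (b/2))
  set S := Real.sin (k * (b/2)) with hSd
  set C := Real.cos (k * (b/2)) with hCd
  field_simp
  linear_combination (b * k^2) * hpy

end QGHelpers

open Filter in
theorem stmt_14 (a b : ℝ) (ha : 0 < a) (hb : 0 < b) (n : ℕ) (hn : 0 < n)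
    (kn : ℝ) (hkn : kn = n * π / a) (hsb : Real.sin (kn * b) ≠ 0)
    (γ : ℝ)
    (hγ : γ = 2 * kn * Real.tan (kn * b / 2) ∨
      γ = -(2 * kn * (Real.cos (kn * b / 2) / Real.sin (kn * b / 2)))) :
    ∃ δ > 0, ∀ k : ℝ, 0 < k → |k - kn| < δ → Real.sin (k * b) ≠ 0 →
      |γ * Real.sin (k * a) / (2 * k) + Real.sin (k * (a + b)) / Real.sin (k * b)| ≤
        1 + |Real.sin (k * a) / Real.sin (k * b)| := by
  have hnR : (0:ℝ) < n := by exact_mod_cast hn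
  have hkn0 : 0 < kn := by rw [hkn]; exact div_pos (mul_pos hnR Real.pi_pos) ha
  have hna : kn * a = n * π := by rw [hkn]; field_simp
  have hs2 : Real.sin (kn * b) = 2 * Real.sin (kn * (b/2)) * Real.cos (kn * (b/2)) := by
    rw [show kn * b = 2 * (kn * (b/2)) by ring, Real.sin_two_mul]
  have hs0 : Real.sin (kn * (b/2)) ≠ 0 := by
    intro h; rw [hs2, h] at hsb; simp at hsb
  have hc0 : Real.cos (kn * (b/2)) ≠ 0 := by
    intro h; rw [hs2, h] at hsb; simp at hsb
  have evne : ∀ᶠ k in nhds kn, k ≠ 0 := eventually_ne_nhds hkn0.ne'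
  rcases hγ with h1 | h2
  · -- first coupling
    set T : ℝ := Real.sin (kn * (b/2)) / Real.cos (kn * (b/2)) with hT
    have hγ1 : γ = 2 * kn * T := by
      rw [h1, show kn * b / 2 = kn * (b/2) by ring, Real.tan_eq_sin_div_cos, hT]
    set F : ℝ → ℝ := fun k => kn * T * k⁻¹ - Real.sin (k * (b/2)) / Real.cos (k * (b/2))
      with hF
    set F' : ℝ → ℝ := fun k => kn * T * (-(k^2)⁻¹) - (b/2) / Real.cos (k * (b/2))^2
      with hF'
    have evc : ∀ᶠ k in nhds kn, Real.cos (k * (b/2)) ≠ 0 :=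
      (show ContinuousAt (fun k : ℝ => Real.cos (k * (b/2))) kn by fun_prop).eventually_ne hc0
    have evd := evne.and evc
    have hf0 : F kn = 0 := by
      simp only [hF]
      rw [← hT, mul_comm kn T, mul_assoc, mul_inv_cancel₀ hkn0.ne', mul_one, sub_self]
    have hder : ∀ᶠ k in nhds kn, HasDerivAt F (F' k) k :=
      evd.mono (fun k hk => qg_d1 b kn T k hk.1 hk.2)
    have hcont : ContinuousAt F' kn := by
      simp only [hF']
      apply ContinuousAt.sub
      · exact continuousAt_const.mul
          (((continuousAt_id.pow 2).inv₀ (pow_ne_zero 2 hkn0.ne')).neg)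
      · exact continuousAt_const.div
          (by fun_prop : ContinuousAt (fun k : ℝ => Real.cos (k * (b/2))^2) kn)
          (pow_ne_zero 2 hc0)
    have hneg : F' kn < 0 := by
      have key := qg_sin_add_self_pos (mul_pos hkn0 hb)
      have hrw : F' kn = -((Real.sin (kn * b) + kn * b) /
          (2 * kn * Real.cos (kn * (b/2))^2)) := by
        simp only [hF']
        rw [hT, hs2]
        set S := Real.sin (kn * (b/2)) with hSd
        set C := Real.cos (kn * (b/2)) with hCd
        field_simp
        ring
      rw [hrw, neg_lt, neg_zero]
      exact div_pos key (by positivity)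
    have H2' := qg_lemB hf0 hder hcont hneg
    refine qg_core a b kn γ 1 n F ha hkn0 hna hsb (by norm_num) hf0 ?_ ?_ ?_
    · refine evd.mono (fun k hk => ?_)
      rw [hγ1]
      exact qg_id1 b kn k T hk.1 hk.2
    · exact H2'.mono (fun k hk => by rw [one_mul]; exact hk)
    · have hFc : ContinuousAt F kn := hder.self_of_nhds.continuousAt
      have hmc : ContinuousAt (fun k => Real.sin (k * b) * F k) kn :=
        ((by fun_prop : ContinuousAt (fun k : ℝ => Real.sin (k * b)) kn)).mul hFc
      have hlt : ∀ᶠ k in nhds kn, |Real.sin (k * b) * F k| < 1 := by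
        have ht := hmc.abs.tendsto
        rw [hf0, mul_zero, abs_zero] at ht
        exact ht.eventually_lt_const one_pos
      exact hlt.mono fun k hk => hk.le
  · -- second coupling
    set C0 : ℝ := Real.cos (kn * (b/2)) / Real.sin (kn * (b/2)) with hC0
    have hγ2 : γ = -(2 * kn * C0) := by
      rw [h2, show kn * b / 2 = kn * (b/2) by ring, hC0]
    set G : ℝ → ℝ := fun k => kn * C0 * k⁻¹ - Real.cos (k * (b/2)) / Real.sin (k * (b/2))
      with hG
    set NG' : ℝ → ℝ := fun k => -(kn * C0 * (-(k^2)⁻¹) + (b/2) / Real.sin (k * (b/2))^2)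
      with hNG'
    have evs : ∀ᶠ k in nhds kn, Real.sin (k * (b/2)) ≠ 0 :=
      (show ContinuousAt (fun k : ℝ => Real.sin (k * (b/2))) kn by fun_prop).eventually_ne hs0
    have evd := evne.and evs
    have hg0 : G kn = 0 := by
      simp only [hG]
      rw [← hC0, mul_comm kn C0, mul_assoc, mul_inv_cancel₀ hkn0.ne', mul_one, sub_self]
    have hng0 : (fun k => -(G k)) kn = 0 := by
      simp only
      rw [hg0, neg_zero]
    have hder : ∀ᶠ k in nhds kn, HasDerivAt (fun k => -(G k)) (NG' k) k := by
      refine evd.mono (fun k hk => ?_)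
      simp only [hG, hNG']
      exact qg_d2 b kn C0 k hk.1 hk.2
    have hcont : ContinuousAt NG' kn := by
      simp only [hNG']
      apply ContinuousAt.neg
      apply ContinuousAt.add
      · exact continuousAt_const.mul
          (((continuousAt_id.pow 2).inv₀ (pow_ne_zero 2 hkn0.ne')).neg)
      · exact continuousAt_const.div
          (by fun_prop : ContinuousAt (fun k : ℝ => Real.sin (k * (b/2))^2) kn)
          (pow_ne_zero 2 hs0)
    have hneg : NG' kn < 0 := by
      have key : Real.sin (kn * b) < kn * b := Real.sin_lt (mul_pos hkn0 hb)
      have hrw : NG' kn = -((kn * b - Real.sin (kn * b)) /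
          (2 * kn * Real.sin (kn * (b/2))^2)) := by
        simp only [hNG']
        rw [hC0, hs2]
        set S := Real.sin (kn * (b/2)) with hSd
        set C := Real.cos (kn * (b/2)) with hCd
        field_simp
        ring
      rw [hrw, neg_lt, neg_zero]
      exact div_pos (by linarith) (by positivity)
    have H2' := qg_lemB (f := fun k => -(G k)) (f' := NG') (kn := kn) hng0 hder hcont hneg
    refine qg_core a b kn γ (-1) n G ha hkn0 hna hsb (by norm_num) hg0 ?_ ?_ ?_
    · refine evd.mono (fun k hk => ?_)
      rw [hγ2]
      exact qg_id2 b kn k C0 hk.1 hk.2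
    · refine H2'.mono (fun k hk => ?_)
      have e : (k - kn) * -(G k) = -1 * ((k - kn) * G k) := by ring
      linarith [e ▸ hk]
    · have hGc : ContinuousAt G kn := by
        have h1 := (hder.self_of_nhds).continuousAt.neg
        simpa only [Pi.neg_def, neg_neg] using h1
      have hmc : ContinuousAt (fun k => Real.sin (k * b) * G k) kn :=
        ((by fun_prop : ContinuousAt (fun k : ℝ => Real.sin (k * b)) kn)).mul hGc
      have hlt : ∀ᶠ k in nhds kn, |Real.sin (k * b) * G k| < 1 := by
        have ht := hmc.abs.tendsto
        rw [hg0, mul_zero, abs_zero] at ht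
        exact ht.eventually_lt_const one_pos
      exact hlt.mono fun k hk => hk.le
end

section
/- Let a,b>0, γ∈ℝ, and k>0 with sin(ka)≠0 and sin(kb)≠0. For τ∈[−1,1] set f_γ^τ(k) := γ·sin(ka)/(2k) + sin(k(a+b))/sin(kb) − τ·sin(ka)/sin(kb), and suppose |f_γ^τ(k)| > 1 for every τ∈[−1,1]. Then each of the two functions τ ↦ γ + (2k/sin(ka))·√((f_γ^τ(k))²−1) and τ ↦ γ − (2k/sin(ka))·√((f_γ^τ(k))²−1) is strictly monotone on [−1,1]. -/
open Real Set

private lemma affine_comb (γ c : ℝ) (hc : c ≠ 0) (g : ℝ → ℝ) (s : Set ℝ)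
    (hg : StrictMonoOn g s ∨ StrictAntiOn g s) :
    StrictMonoOn (fun τ => γ + c * g τ) s ∨ StrictAntiOn (fun τ => γ + c * g τ) s := by
  rcases hc.lt_or_gt with h | h <;> rcases hg with hg | hg
  · right; intro x hx y hy hxy; have := hg hx hy hxy; dsimp only; nlinarith
  · left; intro x hx y hy hxy; have := hg hx hy hxy; dsimp only; nlinarith
  · left; intro x hx y hy hxy; have := hg hx hy hxy; dsimp only; nlinarith
  · right; intro x hx y hy hxy; have := hg hx hy hxy; dsimp only; nlinarith

theorem stmt_15 (a b γ k : ℝ) (ha : 0 < a) (hb : 0 < b) (hk : 0 < k)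
    (hsa : Real.sin (k * a) ≠ 0) (hsb : Real.sin (k * b) ≠ 0)
    (f : ℝ → ℝ)
    (hf : f = fun τ => γ * Real.sin (k * a) / (2 * k) +
        Real.sin (k * (a + b)) / Real.sin (k * b) - τ * Real.sin (k * a) / Real.sin (k * b))
    (hgap : ∀ τ ∈ Set.Icc (-1 : ℝ) 1, 1 < |f τ|) :
    ((StrictMonoOn (fun τ => γ + (2 * k / Real.sin (k * a)) * Real.sqrt ((f τ) ^ 2 - 1))
        (Set.Icc (-1 : ℝ) 1) ∨
      StrictAntiOn (fun τ => γ + (2 * k / Real.sin (k * a)) * Real.sqrt ((f τ) ^ 2 - 1))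
        (Set.Icc (-1 : ℝ) 1)) ∧
    (StrictMonoOn (fun τ => γ - (2 * k / Real.sin (k * a)) * Real.sqrt ((f τ) ^ 2 - 1))
        (Set.Icc (-1 : ℝ) 1) ∨
      StrictAntiOn (fun τ => γ - (2 * k / Real.sin (k * a)) * Real.sqrt ((f τ) ^ 2 - 1))
        (Set.Icc (-1 : ℝ) 1))) := by
  have hs : Real.sin (k * a) / Real.sin (k * b) ≠ 0 := div_ne_zero hsa hsb
  set s := Real.sin (k * a) / Real.sin (k * b) with hsdef
  have hdiff : ∀ x y : ℝ, f x - f y = (y - x) * s := by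
    intro x y; simp only [hf, hsdef]; field_simp; ring
  have hcont : ContinuousOn f (Set.Icc (-1 : ℝ) 1) := by
    rw [hf]; fun_prop
  -- dichotomy: f > 1 everywhere or f < -1 everywhere on Icc
  have hdich : (∀ τ ∈ Set.Icc (-1 : ℝ) 1, 1 < f τ) ∨
      (∀ τ ∈ Set.Icc (-1 : ℝ) 1, f τ < -1) := by
    by_contra hcon
    push_neg at hcon
    obtain ⟨⟨x, hx, hx1⟩, ⟨y, hy, hy1⟩⟩ := hcon
    have hfx : f x < -1 := by
      rcases lt_abs.mp (hgap x hx) with h | h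
      · linarith
      · linarith
    have hfy : 1 < f y := by
      rcases lt_abs.mp (hgap y hy) with h | h
      · exact h
      · linarith
    have hsub : Set.uIcc x y ⊆ Set.Icc (-1 : ℝ) 1 := by
      intro z hz
      rcases le_total x y with h | h
      · rw [Set.uIcc_of_le h] at hz
        exact ⟨le_trans hx.1 hz.1, le_trans hz.2 hy.2⟩
      · rw [Set.uIcc_of_ge h] at hz
        exact ⟨le_trans hy.1 hz.1, le_trans hz.2 hx.2⟩
    have hIVT := intermediate_value_uIcc (hcont.mono hsub)
    have h0 : (0 : ℝ) ∈ Set.uIcc (f x) (f y) := by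
      rw [Set.mem_uIcc]; left; constructor <;> linarith
    obtain ⟨τ₀, hτ₀, hfτ₀⟩ := hIVT h0
    have := hgap τ₀ (hsub hτ₀)
    rw [hfτ₀] at this
    simp only [abs_zero] at this
    linarith
  -- the square-root function is strictly monotone or strictly antitone
  have key : ∀ x ∈ Set.Icc (-1 : ℝ) 1, ∀ y ∈ Set.Icc (-1 : ℝ) 1,
      (f x) ^ 2 < (f y) ^ 2 →
      Real.sqrt ((f x) ^ 2 - 1) < Real.sqrt ((f y) ^ 2 - 1) := by
    intro x hx y hy hlt
    have h1 := hgap x hx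
    have h0 : (0 : ℝ) ≤ (f x) ^ 2 - 1 := by
      nlinarith [sq_abs (f x), abs_nonneg (f x)]
    exact Real.sqrt_lt_sqrt h0 (by linarith)
  have hg : StrictMonoOn (fun τ => Real.sqrt ((f τ) ^ 2 - 1)) (Set.Icc (-1 : ℝ) 1) ∨
      StrictAntiOn (fun τ => Real.sqrt ((f τ) ^ 2 - 1)) (Set.Icc (-1 : ℝ) 1) := by
    rcases hs.lt_or_gt with hsgn | hsgn <;> rcases hdich with hd | hd
    · left; intro x hx y hy hxy
      have hp : (y - x) * s < 0 := mul_neg_of_pos_of_neg (by linarith) hsgn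
      have hlt : f x < f y := by linarith [hdiff x y]
      exact key x hx y hy (by nlinarith [hd x hx, hd y hy])
    · right; intro x hx y hy hxy
      have hp : (y - x) * s < 0 := mul_neg_of_pos_of_neg (by linarith) hsgn
      have hlt : f x < f y := by linarith [hdiff x y]
      exact key y hy x hx (by nlinarith [hd x hx, hd y hy])
    · right; intro x hx y hy hxy
      have hp : 0 < (y - x) * s := mul_pos (by linarith) hsgn
      have hlt : f y < f x := by linarith [hdiff x y]
      exact key y hy x hx (by nlinarith [hd x hx, hd y hy])
    · left; intro x hx y hy hxy
      have hp : 0 < (y - x) * s := mul_pos (by linarith) hsgn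
      have hlt : f y < f x := by linarith [hdiff x y]
      exact key x hx y hy (by nlinarith [hd x hx, hd y hy])
  have hc : 2 * k / Real.sin (k * a) ≠ 0 := div_ne_zero (by positivity) hsa
  constructor
  · exact affine_comb γ _ hc _ _ hg
  · have h2 := affine_comb γ (-(2 * k / Real.sin (k * a))) (neg_ne_zero.mpr hc) _ _ hg
    have hfun : (fun τ => γ + -(2 * k / Real.sin (k * a)) * Real.sqrt ((f τ) ^ 2 - 1)) =
        (fun τ => γ - (2 * k / Real.sin (k * a)) * Real.sqrt ((f τ) ^ 2 - 1)) := by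
      funext τ; ring
    rwa [hfun] at h2
end

section
/- Let a,b>0 and γ∈ℝ. Define B := {E>0 : with k:=√E one has sin(kb)≠0 and |γ·sin(ka)/(2k) + sin(k(a+b))/sin(kb)| ≤ 1 + |sin(ka)/sin(kb)|}. Then (1/K)·λ(B∩[0,K]) tends to 1 as K→∞, where λ denotes Lebesgue measure. -/
open Real Set Filter MeasureTheory

lemma band_holds {a b γ k : ℝ} (hk : 0 < k) (hsb : Real.sin (k*b) ≠ 0)
    (h : Real.sin (k*a) = 0 ∨ |γ| / k ≤ |Real.sin (k*a)|) :
    |γ * Real.sin (k*a) / (2*k) + Real.sin (k*(a+b)) / Real.sin (k*b)| ≤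
      1 + |Real.sin (k*a) / Real.sin (k*b)| := by
  have hexp : k*(a+b) = k*a + k*b := by ring
  rw [hexp, Real.sin_add]
  have heq : γ * Real.sin (k*a) / (2*k) +
      (Real.sin (k*a) * Real.cos (k*b) + Real.cos (k*a) * Real.sin (k*b)) / Real.sin (k*b)
      = γ * Real.sin (k*a) / (2*k) + Real.sin (k*a) * Real.cos (k*b) / Real.sin (k*b)
        + Real.cos (k*a) := by
    field_simp
    ring
  rw [heq]
  refine (abs_add_three _ _ _).trans ?_
  have hT2 : |Real.sin (k*a) * Real.cos (k*b) / Real.sin (k*b)| ≤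
      |Real.sin (k*a) / Real.sin (k*b)| := by
    rw [abs_div, abs_div, abs_mul]
    gcongr
    exact mul_le_of_le_one_right (abs_nonneg _) (abs_cos_le_one _)
  rcases h with h | h
  · rw [h]
    simp only [mul_zero, zero_mul, zero_div, abs_zero, zero_add]
    linarith [abs_cos_le_one (k*a)]
  · have hγ : |γ| ≤ k * |Real.sin (k*a)| := by
      have := (div_le_iff₀ hk).mp h; linarith
    have hT1 : |γ * Real.sin (k*a) / (2*k)| ≤ |Real.sin (k*a)|^2 / 2 := by
      rw [abs_div, abs_mul]
      rw [abs_of_pos (by positivity : (0:ℝ) < 2*k)]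
      rw [div_le_div_iff₀ (by positivity) (by norm_num)]
      have hs := abs_nonneg (Real.sin (k*a))
      nlinarith
    have hpyth : |Real.sin (k*a)|^2 + |Real.cos (k*a)|^2 = 1 := by
      rw [sq_abs, sq_abs]; exact Real.sin_sq_add_cos_sq _
    have hc : |Real.cos (k*a)| ≤ 1 := abs_cos_le_one _
    have hT1' : |γ * Real.sin (k*a) / (2*k)| ≤ 1 - |Real.cos (k*a)| := by
      nlinarith [abs_nonneg (Real.cos (k*a))]
    linarith

lemma cover_lemma {a : ℝ} (ha : 0 < a) {ε K E : ℝ} (hE0 : 0 ≤ E) (hEK : E ≤ K)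
    (hs : |Real.sin (Real.sqrt E * a)| ≤ ε) :
    ∃ n : ℕ, (n : ℝ) ≤ Real.sqrt K * a / π + 1 ∧
      |E - ((n : ℝ) * π / a)^2| ≤ (π*ε/(2*a)) * (2*Real.sqrt K + π*ε/(2*a)) := by
  set k := Real.sqrt E with hk
  have hk0 : 0 ≤ k := Real.sqrt_nonneg _
  have hkK : k ≤ Real.sqrt K := Real.sqrt_le_sqrt hEK
  have hx0 : 0 ≤ k * a := by positivity
  set m := round (k * a / π) with hm
  have hround : |k * a/π - (m:ℝ)| ≤ 1/2 := abs_sub_round _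
  have hπ : (0:ℝ) < π := Real.pi_pos
  have hm0 : 0 ≤ m := by
    by_contra hneg
    push_neg at hneg
    have hm1 : m ≤ -1 := by omega
    have h1 : (m:ℝ) ≤ -1 := by exact_mod_cast hm1
    have hxp : 0 ≤ k * a/π := by positivity
    have h2 := abs_le.mp hround
    linarith [h2.2]
  have hmR : (0:ℝ) ≤ (m:ℝ) := by exact_mod_cast hm0
  refine ⟨m.toNat, ?_, ?_⟩
  all_goals have hcast : ((m.toNat : ℕ) : ℝ) = (m : ℝ) := by exact_mod_cast Int.toNat_of_nonneg hm0
  · rw [hcast]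
    have h1 : (m:ℝ) ≤ k * a/π + 1/2 := by have := abs_le.mp hround; linarith [this.1]
    have h2 : k * a ≤ Real.sqrt K * a := by nlinarith
    have h3 : k * a/π ≤ Real.sqrt K * a / π := by gcongr
    linarith
  · rw [hcast]
    set y := k * a - (m:ℝ) * π with hy
    have hy2 : |y| ≤ π/2 := by
      have hyy : y = π * (k * a/π - (m:ℝ)) := by field_simp [hy]; ring
      rw [hyy, abs_mul, abs_of_pos hπ]; nlinarith [hround]
    have hsiny : |Real.sin y| = |Real.sin (k * a)| := by
      rw [hy, Real.sin_sub_int_mul_pi, abs_mul]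
      rcases Int.even_or_odd m with he | ho
      · rw [he.neg_one_zpow, abs_one, one_mul]
      · rw [ho.neg_one_zpow, abs_neg, abs_one, one_mul]
    have hJ : 2/π * |y| ≤ |Real.sin y| := by
      have h1 : 2/π * |y| ≤ Real.sin |y| := Real.mul_le_sin (abs_nonneg _) hy2
      have h2 : Real.sin |y| ≤ |Real.sin y| := by
        rcases abs_cases y with ⟨h, _⟩ | ⟨h, _⟩
        · rw [h]; exact le_abs_self _
        · rw [h, Real.sin_neg, ← abs_neg (Real.sin y)]; exact le_abs_self _
      linarith
    have hyε : |y| ≤ π * ε / 2 := by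
      have hle : 2/π * |y| ≤ ε := le_trans hJ (hsiny ▸ hs)
      have h4 := mul_le_mul_of_nonneg_left hle (by positivity : (0:ℝ) ≤ π/2)
      have h5 : π/2 * (2/π * |y|) = |y| := by field_simp
      linarith
    set δ := π * ε / (2*a) with hδ
    have hδ0 : 0 ≤ δ := by
      have hε0 : 0 ≤ ε := le_trans (abs_nonneg _) hs
      positivity
    have hkm : |k - (m:ℝ)*π/a| ≤ δ := by
      have heq2 : k - (m:ℝ)*π/a = y / a := by field_simp [hy]; exact hy.symm
      rw [heq2, abs_div, abs_of_pos ha, hδ]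
      rw [div_le_div_iff₀ ha (by positivity)]
      nlinarith [hyε]
    set c := (m:ℝ)*π/a with hc
    have hc0 : 0 ≤ c := by positivity
    have hE : E = k^2 := (Real.sq_sqrt hE0).symm
    have habs : |E - c^2| = |k - c| * (k + c) := by
      rw [hE, show k^2 - c^2 = (k-c)*(k+c) by ring, abs_mul,
        abs_of_nonneg (by linarith : (0:ℝ) ≤ k + c)]
    rw [habs]
    have hkm2 := abs_le.mp hkm
    have hcK : c ≤ Real.sqrt K + δ := by linarith [hkm2.1]
    have : k + c ≤ 2 * Real.sqrt K + δ := by linarith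
    calc |k - c| * (k + c) ≤ δ * (k + c) := by
            apply mul_le_mul_of_nonneg_right hkm (by linarith)
      _ ≤ δ * (2*Real.sqrt K + δ) := by
            apply mul_le_mul_of_nonneg_left this hδ0

lemma cover_measure {a : ℝ} (ha : 0 < a) {ε : ℝ} (hε : 0 ≤ ε) (K : ℝ) :
    volume {E : ℝ | 0 ≤ E ∧ E ≤ K ∧ |Real.sin (Real.sqrt E * a)| ≤ ε} ≤
      ENNReal.ofReal (((⌊Real.sqrt K * a / π⌋₊ : ℝ) + 2) *
        (2 * ((π*ε/(2*a)) * (2*Real.sqrt K + π*ε/(2*a))))) := by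
  set δ := π*ε/(2*a) with hδ
  set r := δ * (2*Real.sqrt K + δ) with hr
  set N := ⌊Real.sqrt K * a / π⌋₊ + 2 with hN
  have hr0 : 0 ≤ r := by
    have : 0 ≤ δ := by positivity
    have h2 : 0 ≤ Real.sqrt K := Real.sqrt_nonneg _
    nlinarith
  have hsub : {E : ℝ | 0 ≤ E ∧ E ≤ K ∧ |Real.sin (Real.sqrt E * a)| ≤ ε} ⊆
      ⋃ n ∈ Finset.range N, Icc (((n:ℝ)*π/a)^2 - r) (((n:ℝ)*π/a)^2 + r) := by
    rintro E ⟨hE0, hEK, hsE⟩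
    obtain ⟨n, hn1, hn2⟩ := cover_lemma ha hE0 hEK hsE
    refine mem_iUnion₂.mpr ⟨n, ?_, ?_⟩
    · rw [Finset.mem_range]
      have h0 : 0 ≤ Real.sqrt K * a / π := by positivity
      have hfl := Nat.lt_floor_add_one (Real.sqrt K * a / π)
      have : (n:ℝ) < (⌊Real.sqrt K * a / π⌋₊ : ℝ) + 2 := by linarith
      have : (n:ℝ) < ((N:ℕ):ℝ) := by rw [hN]; push_cast; linarith
      exact_mod_cast this
    · rw [mem_Icc]
      have := abs_le.mp hn2
      constructor <;> linarith [this.1, this.2]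
  calc volume {E : ℝ | 0 ≤ E ∧ E ≤ K ∧ |Real.sin (Real.sqrt E * a)| ≤ ε}
      ≤ volume (⋃ n ∈ Finset.range N, Icc (((n:ℝ)*π/a)^2 - r) (((n:ℝ)*π/a)^2 + r)) :=
        measure_mono hsub
    _ ≤ ∑ n ∈ Finset.range N, volume (Icc (((n:ℝ)*π/a)^2 - r) (((n:ℝ)*π/a)^2 + r)) :=
        measure_biUnion_finset_le _ _
    _ = ∑ _n ∈ Finset.range N, ENNReal.ofReal (2*r) := by
        refine Finset.sum_congr rfl fun n _ => ?_
        rw [Real.volume_Icc]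
        congr 1; ring
    _ = (N : ENNReal) * ENNReal.ofReal (2*r) := by
        rw [Finset.sum_const, Finset.card_range, nsmul_eq_mul]
    _ = ENNReal.ofReal (((⌊Real.sqrt K * a / π⌋₊ : ℝ) + 2) * (2*r)) := by
        rw [show ((⌊Real.sqrt K * a / π⌋₊ : ℝ) + 2) = ((N : ℕ) : ℝ) by rw [hN]; push_cast; ring]
        rw [ENNReal.ofReal_mul (by positivity : (0:ℝ) ≤ ((N:ℕ):ℝ)), ENNReal.ofReal_natCast]

set_option maxHeartbeats 1000000 in
theorem stmt_19 (a b γ : ℝ) (ha : 0 < a) (hb : 0 < b)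
    (B : Set ℝ)
    (hB : B = {E : ℝ | 0 < E ∧ Real.sin (Real.sqrt E * b) ≠ 0 ∧
      |γ * Real.sin (Real.sqrt E * a) / (2 * Real.sqrt E) +
          Real.sin (Real.sqrt E * (a + b)) / Real.sin (Real.sqrt E * b)| ≤
        1 + |Real.sin (Real.sqrt E * a) / Real.sin (Real.sqrt E * b)|}) :
    Tendsto (fun K : ℝ => (volume (B ∩ Set.Icc 0 K)).toReal / K) atTop (nhds 1) := by
  have hπ : (0:ℝ) < π := Real.pi_pos
  -- measurability of B
  have hBm : MeasurableSet B := by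
    rw [hB]
    have h1 : MeasurableSet {E : ℝ | 0 < E} := measurableSet_Ioi
    have hsq : Measurable (fun E : ℝ => Real.sqrt E) := Real.continuous_sqrt.measurable
    have hf : ∀ c : ℝ, Measurable (fun E : ℝ => Real.sin (Real.sqrt E * c)) := fun c =>
      Real.continuous_sin.measurable.comp (hsq.mul_const c)
    have h2 : MeasurableSet {E : ℝ | Real.sin (Real.sqrt E * b) ≠ 0} :=
      ((hf b) (measurableSet_singleton 0)).compl
    have hg : Measurable (fun E : ℝ =>
        |γ * Real.sin (Real.sqrt E * a) / (2 * Real.sqrt E) +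
          Real.sin (Real.sqrt E * (a + b)) / Real.sin (Real.sqrt E * b)|) := by
      apply Measurable.abs
      exact (((hf a).const_mul γ).div ((hsq.const_mul 2).mono le_rfl le_rfl)).add
        ((hf (a+b)).div (hf b)) |>.mono le_rfl le_rfl
    have hh : Measurable (fun E : ℝ =>
        1 + |Real.sin (Real.sqrt E * a) / Real.sin (Real.sqrt E * b)|) :=
      (((hf a).div (hf b)).abs.const_add 1)
    have h3 : MeasurableSet {E : ℝ |
        |γ * Real.sin (Real.sqrt E * a) / (2 * Real.sqrt E) +
          Real.sin (Real.sqrt E * (a + b)) / Real.sin (Real.sqrt E * b)| ≤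
        1 + |Real.sin (Real.sqrt E * a) / Real.sin (Real.sqrt E * b)|} :=
      measurableSet_le hg hh
    exact (h1.inter (h2.inter h3) : MeasurableSet _).congr (by ext E; simp [mem_setOf_eq, and_assoc])
  rw [Metric.tendsto_atTop]
  intro η hη
  obtain ⟨C, hCdef⟩ : ∃ C : ℝ, C = (π/a) * (a/π + 2) * (2 + π/(2*a)) := ⟨_, rfl⟩
  have hC0 : 0 < C := by rw [hCdef]; positivity
  obtain ⟨ε, hεdef⟩ : ∃ ε : ℝ, ε = min 1 (η/(4*C)) := ⟨_, rfl⟩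
  have hε0 : 0 < ε := hεdef ▸ lt_min one_pos (by positivity)
  have hε1 : ε ≤ 1 := hεdef ▸ min_le_left _ _
  obtain ⟨M, hMdef⟩ : ∃ M : ℝ, M = γ^2/ε^2 + 1 := ⟨_, rfl⟩
  have hM0 : 0 < M := by rw [hMdef]; positivity
  have hγM : |γ| / Real.sqrt M ≤ ε := by
    have h1 : |γ| / ε ≤ Real.sqrt M := by
      rw [show |γ|/ε = Real.sqrt ((|γ|/ε)^2) from (Real.sqrt_sq (by positivity)).symm]
      apply Real.sqrt_le_sqrt
      rw [div_pow, sq_abs, hMdef]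
      linarith
    have hsM : 0 < Real.sqrt M := Real.sqrt_pos.mpr hM0
    rw [div_le_iff₀ hsM]
    rw [div_le_iff₀ hε0] at h1
    linarith
  refine ⟨max 1 (4*M/η), fun K hK => ?_⟩
  have hK1 : (1:ℝ) ≤ K := le_trans (le_max_left _ _) hK
  have hK0 : (0:ℝ) < K := by linarith
  have hKM : 4*M/η ≤ K := le_trans (le_max_right _ _) hK
  have hs0 : 0 ≤ Real.sqrt K := Real.sqrt_nonneg _
  have hs1 : 1 ≤ Real.sqrt K := by
    rw [show (1:ℝ) = Real.sqrt 1 by simp]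
    exact Real.sqrt_le_sqrt hK1
  have hss : Real.sqrt K * Real.sqrt K = K := Real.mul_self_sqrt (by linarith)
  -- set decomposition
  have hsub : Icc 0 K \ B ⊆ Icc 0 M ∪
      ({E : ℝ | 0 < E ∧ Real.sin (Real.sqrt E * b) = 0} ∪
       {E : ℝ | 0 ≤ E ∧ E ≤ K ∧ |Real.sin (Real.sqrt E * a)| ≤ ε}) := by
    rintro E ⟨⟨hE0, hEK⟩, hEB⟩
    by_cases hEM : E ≤ M
    · exact Or.inl ⟨hE0, hEM⟩
    push_neg at hEM
    have hE0' : 0 < E := lt_trans hM0 hEM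
    by_cases hsb : Real.sin (Real.sqrt E * b) = 0
    · exact Or.inr (Or.inl ⟨hE0', hsb⟩)
    refine Or.inr (Or.inr ⟨hE0, hEK, ?_⟩)
    by_contra hcon
    push_neg at hcon
    apply hEB
    rw [hB]
    refine ⟨hE0', hsb, ?_⟩
    have hkpos : 0 < Real.sqrt E := Real.sqrt_pos.mpr hE0'
    apply band_holds hkpos hsb
    right
    have hME : Real.sqrt M ≤ Real.sqrt E := Real.sqrt_le_sqrt hEM.le
    have hMs : 0 < Real.sqrt M := Real.sqrt_pos.mpr hM0
    calc |γ| / Real.sqrt E ≤ |γ| / Real.sqrt M := by gcongr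
      _ ≤ ε := hγM
      _ ≤ |Real.sin (Real.sqrt E * a)| := hcon.le
  have hvolZ : volume {E : ℝ | 0 < E ∧ Real.sin (Real.sqrt E * b) = 0} = 0 := by
    apply measure_mono_null
      (?_ : _ ⊆ Set.range (fun n : ℕ => (((n:ℝ))*π/b)^2))
    · exact (Set.countable_range _).measure_zero _
    rintro E ⟨hE, hsE⟩
    obtain ⟨m, hm⟩ := Real.sin_eq_zero_iff.mp hsE
    have hEb : 0 ≤ Real.sqrt E * b := mul_nonneg (Real.sqrt_nonneg E) hb.le
    have hm0 : 0 ≤ m := by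
      by_contra hneg
      push_neg at hneg
      have hm1 : m ≤ -1 := by omega
      have hm1' : (m:ℝ) ≤ -1 := by exact_mod_cast hm1
      nlinarith
    refine ⟨m.toNat, ?_⟩
    have hcast : ((m.toNat : ℕ) : ℝ) = (m:ℝ) := by exact_mod_cast Int.toNat_of_nonneg hm0
    simp only
    rw [hcast]
    have hdiv : (m:ℝ)*π/b = Real.sqrt E := by
      field_simp
      linarith [hm]
    rw [hdiv, Real.sq_sqrt hE.le]
  have hcov := cover_measure ha hε0.le K
  have hδ0 : 0 ≤ π*ε/(2*a) := by positivity
  have hterm0 : 0 ≤ ((⌊Real.sqrt K * a / π⌋₊ : ℝ) + 2) *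
      (2 * ((π*ε/(2*a)) * (2*Real.sqrt K + π*ε/(2*a)))) := by positivity
  have hdiff_le : volume (Icc 0 K \ B) ≤
      ENNReal.ofReal (M + ((⌊Real.sqrt K * a / π⌋₊ : ℝ) + 2) *
        (2 * ((π*ε/(2*a)) * (2*Real.sqrt K + π*ε/(2*a))))) := by
    rw [ENNReal.ofReal_add hM0.le hterm0]
    calc volume (Icc 0 K \ B) ≤ volume (Icc 0 M ∪ _) := measure_mono hsub
      _ ≤ volume (Icc 0 M) + volume ({E : ℝ | 0 < E ∧ Real.sin (Real.sqrt E * b) = 0} ∪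
            {E : ℝ | 0 ≤ E ∧ E ≤ K ∧ |Real.sin (Real.sqrt E * a)| ≤ ε}) := measure_union_le _ _
      _ ≤ volume (Icc 0 M) + (volume {E : ℝ | 0 < E ∧ Real.sin (Real.sqrt E * b) = 0} +
            volume {E : ℝ | 0 ≤ E ∧ E ≤ K ∧ |Real.sin (Real.sqrt E * a)| ≤ ε}) := by
          gcongr
          exact measure_union_le _ _
      _ ≤ ENNReal.ofReal M + ENNReal.ofReal (((⌊Real.sqrt K * a / π⌋₊ : ℝ) + 2) *
            (2 * ((π*ε/(2*a)) * (2*Real.sqrt K + π*ε/(2*a))))) := by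
          rw [hvolZ, zero_add, Real.volume_Icc, sub_zero]
          gcongr
  have hgle : (volume (Icc 0 K \ B)).toReal ≤ M + ((⌊Real.sqrt K * a / π⌋₊ : ℝ) + 2) *
      (2 * ((π*ε/(2*a)) * (2*Real.sqrt K + π*ε/(2*a)))) :=
    ENNReal.toReal_le_of_le_ofReal (add_nonneg hM0.le hterm0) hdiff_le
  -- Real arithmetic bound
  have hfl : ((⌊Real.sqrt K * a / π⌋₊ : ℕ) : ℝ) ≤ Real.sqrt K * a / π := Nat.floor_le (by positivity)
  have heπ : Real.sqrt K * a / π = Real.sqrt K * (a/π) := by ring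
  have hN2 : ((⌊Real.sqrt K * a / π⌋₊ : ℝ) + 2) ≤ Real.sqrt K * (a/π + 2) := by
    have h1 : Real.sqrt K * (a/π + 2) = Real.sqrt K * (a/π) + 2 * Real.sqrt K := by ring
    rw [h1]
    linarith [hfl, heπ, hs1]
  have hδ1 : π*ε/(2*a) ≤ (π/(2*a)) * Real.sqrt K := by
    have h1 : π*ε/(2*a) = (π/(2*a)) * ε := by ring
    have h2 : (0:ℝ) < π/(2*a) := by positivity
    nlinarith
  have h2s : 2*Real.sqrt K + π*ε/(2*a) ≤ Real.sqrt K * (2 + π/(2*a)) := by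
    have h1 : Real.sqrt K * (2 + π/(2*a)) = 2*Real.sqrt K + (π/(2*a)) * Real.sqrt K := by ring
    linarith
  have hprod : ((⌊Real.sqrt K * a / π⌋₊ : ℝ) + 2) *
      (2 * ((π*ε/(2*a)) * (2*Real.sqrt K + π*ε/(2*a)))) ≤
      (Real.sqrt K * (a/π + 2)) * (2 * ((π*ε/(2*a)) * (Real.sqrt K * (2 + π/(2*a))))) := by
    apply mul_le_mul hN2 ?_ (by positivity) (by positivity)
    have h3 : (π*ε/(2*a)) * (2*Real.sqrt K + π*ε/(2*a)) ≤
        (π*ε/(2*a)) * (Real.sqrt K * (2 + π/(2*a))) :=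
      mul_le_mul_of_nonneg_left h2s hδ0
    linarith
  have heqC : (Real.sqrt K * (a/π + 2)) * (2 * ((π*ε/(2*a)) * (Real.sqrt K * (2 + π/(2*a))))) =
      ε * C * (Real.sqrt K * Real.sqrt K) := by
    rw [hCdef]
    ring
  rw [hss] at heqC
  have hεC : ε * C ≤ η/4 := by
    have h1 : ε ≤ η/(4*C) := by rw [hεdef]; exact min_le_right _ _
    have h2 : ε * C ≤ (η/(4*C)) * C := mul_le_mul_of_nonneg_right h1 hC0.le
    have h3 : (η/(4*C)) * C = η/4 := by field_simp
    linarith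
  have hMK : M ≤ η/4 * K := by
    rw [div_le_iff₀ hη] at hKM
    linarith
  have hgle2 : (volume (Icc 0 K \ B)).toReal ≤ η/2 * K := by
    have h4 : ε * C * K ≤ η/4 * K := by nlinarith
    calc (volume (Icc 0 K \ B)).toReal ≤ _ := hgle
      _ ≤ M + ε * C * K := by rw [← heqC]; linarith [hprod]
      _ ≤ η/4 * K + η/4 * K := by linarith
      _ = η/2 * K := by ring
  -- relate volume of B ∩ Icc to complement
  have hkey := measure_inter_add_diff (μ := volume) (Icc 0 K) hBm
  have hfin1 : volume (Icc 0 K ∩ B) ≠ ⊤ :=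
    ((measure_mono inter_subset_left).trans_lt measure_Icc_lt_top).ne
  have hfin2 : volume (Icc 0 K \ B) ≠ ⊤ :=
    ((measure_mono diff_subset).trans_lt measure_Icc_lt_top).ne
  have htr := congrArg ENNReal.toReal hkey
  rw [ENNReal.toReal_add hfin1 hfin2, Real.volume_Icc, sub_zero,
    ENNReal.toReal_ofReal hK0.le] at htr
  have hvB : (volume (B ∩ Icc 0 K)).toReal = K - (volume (Icc 0 K \ B)).toReal := by
    rw [inter_comm]
    linarith
  rw [Real.dist_eq, hvB]
  have hgeq : (K - (volume (Icc 0 K \ B)).toReal)/K - 1 =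
      -((volume (Icc 0 K \ B)).toReal/K) := by field_simp; ring
  rw [hgeq, abs_neg, abs_of_nonneg (div_nonneg ENNReal.toReal_nonneg hK0.le)]
  have hfinal : (volume (Icc 0 K \ B)).toReal / K ≤ η/2 := by
    rw [div_le_iff₀ hK0]
    linarith
  linarith [half_lt_self hη]
end
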